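/- arXiv:math/0511390 — 7 statements merged into one kernel-verified Lean document; each statement's English description precedes it below -/
import Mathlib

section
/- Let (a_i)_{i≥1} be any sequence of integers and let f = 1 + Σ_{i≥1} a_i X^i ∈ ℤ⟦X⟧. Then there exists a unique sequence of integers (b_i)_{i≥1} such that f = Π_{i≥1} (1 − X^i)^{b_i}, where the infinite product is understood coefficientwise: for every n ≥ 1, the coefficient of X^n in the finite product Π_{i=1}^{n} (1 − X^i)^{b_i} equals a_n. -/
/-- Integer power of an element of a monoid with zero: for units this agrees with
the `zpow` in the unit group; negative exponents use `Ring.inverse`. -/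
noncomputable def ringZpow {R : Type*} [MonoidWithZero R] (f : R) (n : ℤ) : R :=
  if 0 ≤ n then f ^ n.toNat else Ring.inverse f ^ (-n).toNat


open PowerSeries Finset

local notation "ℤX" => PowerSeries ℤ

lemma myUnit (n : ℕ) (hn : 1 ≤ n) : IsUnit (1 - (X : ℤX) ^ n) := by
  rw [PowerSeries.isUnit_iff_constantCoeff]
  simp [zero_pow (by omega : n ≠ 0)]

lemma invA (n : ℕ) (hn : 1 ≤ n) :
    ∃ s : ℤX, Ring.inverse (1 - (X : ℤX) ^ n) = 1 + X ^ n + X ^ (n + 1) * s := by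
  set v := Ring.inverse (1 - (X : ℤX) ^ n) with hv
  have h1 : v * (1 - (X : ℤX) ^ n) = 1 := Ring.inverse_mul_cancel _ (myUnit n hn)
  refine ⟨X ^ (n - 1) * v, ?_⟩
  have hpow : (X : ℤX) ^ (n + 1) * X ^ (n - 1) = X ^ n * X ^ n := by
    rw [← pow_add, ← pow_add]; congr 1; omega
  linear_combination (1 + (X:ℤX) ^ n) * h1 - v * hpow

lemma natA (n : ℕ) (hn : 1 ≤ n) (k : ℕ) :
    ∃ r : ℤX, (1 - (X : ℤX) ^ n) ^ k = 1 - (k : ℤX) * X ^ n + X ^ (n + 1) * r := by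
  induction k with
  | zero => exact ⟨0, by simp⟩
  | succ k ih =>
    obtain ⟨r, hr⟩ := ih
    have hpow : (X : ℤX) ^ (n + 1) * X ^ (n - 1) = X ^ n * X ^ n := by
      rw [← pow_add, ← pow_add]; congr 1; omega
    refine ⟨(k : ℤX) * X ^ (n - 1) + r - r * X ^ n, ?_⟩
    push_cast
    rw [pow_succ, hr]
    linear_combination (-(k : ℤX)) * hpow

lemma natAinv (n : ℕ) (hn : 1 ≤ n) (k : ℕ) :
    ∃ r : ℤX, (Ring.inverse (1 - (X : ℤX) ^ n)) ^ k
      = 1 + (k : ℤX) * X ^ n + X ^ (n + 1) * r := by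
  obtain ⟨s, hs⟩ := invA n hn
  induction k with
  | zero => exact ⟨0, by simp⟩
  | succ k ih =>
    obtain ⟨r, hr⟩ := ih
    have hpow : (X : ℤX) ^ (n + 1) * X ^ (n - 1) = X ^ n * X ^ n := by
      rw [← pow_add, ← pow_add]; congr 1; omega
    refine ⟨s + (k : ℤX) * X ^ (n - 1) + (k : ℤX) * X ^ n * s + r + X ^ n * r
      + X ^ (n + 1) * r * s, ?_⟩
    push_cast
    rw [pow_succ, hr, hs]
    linear_combination (-(k : ℤX)) * hpow

lemma zpowA (n : ℕ) (hn : 1 ≤ n) (m : ℤ) :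
    ∃ r : ℤX, ringZpow (1 - (X : ℤX) ^ n) m = 1 - (m : ℤX) * X ^ n + X ^ (n + 1) * r := by
  unfold ringZpow
  split_ifs with h
  · obtain ⟨r, hr⟩ := natA n hn m.toNat
    refine ⟨r, ?_⟩
    rw [hr]
    have h2 : ((m.toNat : ℤ) : ℤX) = ((m : ℤ) : ℤX) := by rw [Int.toNat_of_nonneg h]
    push_cast at h2
    rw [h2]
  · obtain ⟨r, hr⟩ := natAinv n hn (-m).toNat
    refine ⟨r, ?_⟩
    rw [hr]
    have h2 : (((-m).toNat : ℤ) : ℤX) = ((-m : ℤ) : ℤX) := by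
      rw [Int.toNat_of_nonneg (by omega : (0:ℤ) ≤ -m)]
    push_cast at h2
    rw [h2]
    ring

lemma constZ (n : ℕ) (hn : 1 ≤ n) (m : ℤ) :
    constantCoeff (R := ℤ) (ringZpow (1 - (X : ℤX) ^ n) m) = 1 := by
  obtain ⟨r, hr⟩ := zpowA n hn m
  rw [hr]
  simp [zero_pow (by omega : n ≠ 0)]

lemma constProd (b : ℕ → ℤ) (k : ℕ) :
    constantCoeff (R := ℤ) (∏ i ∈ Icc 1 k, ringZpow (1 - (X : ℤX) ^ i) (b i)) = 1 := by
  rw [map_prod]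
  apply Finset.prod_eq_one
  intro i hi
  exact constZ i (by simp [Finset.mem_Icc] at hi; omega) (b i)

lemma coeffB (n : ℕ) (hn : 1 ≤ n) (f : ℤX) (m : ℤ) :
    coeff (R := ℤ) n (f * ringZpow (1 - (X : ℤX) ^ n) m)
      = coeff (R := ℤ) n f - m * constantCoeff (R := ℤ) f := by
  obtain ⟨r, hr⟩ := zpowA n hn m
  rw [hr]
  have e1 : f * (1 - (m : ℤX) * X ^ n + X ^ (n + 1) * r)
      = f - m • (f * X ^ n) + (f * r) * X ^ (n + 1) := by
    rw [zsmul_eq_mul]; ring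
  rw [e1, map_add, map_sub, map_smul]
  have e2 : coeff (R := ℤ) n (f * X ^ n) = constantCoeff (R := ℤ) f := by
    have := PowerSeries.coeff_mul_X_pow f n 0
    simpa using this
  have e3 : coeff (R := ℤ) n ((f * r) * X ^ (n + 1)) = 0 := by
    rw [PowerSeries.coeff_mul_X_pow']
    simp
  rw [e2, e3, add_zero, smul_eq_mul]

lemma stepB (b : ℕ → ℤ) (n : ℕ) (hn : 1 ≤ n) :
    coeff (R := ℤ) n (∏ i ∈ Icc 1 n, ringZpow (1 - (X : ℤX) ^ i) (b i))
      = coeff (R := ℤ) n (∏ i ∈ Icc 1 (n - 1), ringZpow (1 - (X : ℤX) ^ i) (b i)) - b n := by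
  obtain ⟨k, rfl⟩ : ∃ k, n = k + 1 := ⟨n - 1, by omega⟩
  rw [Finset.prod_Icc_succ_top (by omega : 1 ≤ k + 1)]
  rw [coeffB (k + 1) (by omega) _ (b (k + 1)), constProd]
  simp

noncomputable def bSeq (a : ℕ → ℤ) : ℕ → ℤ
  | n =>
    (PowerSeries.coeff (R := ℤ) n)
      (∏ i ∈ (Finset.Icc 1 (n - 1)).attach,
        ringZpow (1 - (X : ℤX) ^ (i : ℕ)) (bSeq a i)) - a n
  termination_by n => n
  decreasing_by
    have := i.2
    simp only [Finset.mem_Icc] at this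
    omega

lemma bSeq_eq (a : ℕ → ℤ) (n : ℕ) :
    bSeq a n =
      coeff (R := ℤ) n (∏ i ∈ Icc 1 (n - 1), ringZpow (1 - (X : ℤX) ^ i) (bSeq a i)) - a n := by
  rw [bSeq, Finset.prod_attach (Finset.Icc 1 (n - 1))
    (fun j => ringZpow (1 - (X : ℤX) ^ j) (bSeq a j))]


/-- Lemma 2.1 (Transform1, existence and uniqueness part): given any integer sequence
`(a_i)_{i ≥ 1}`, there is a unique integer sequence `(b_i)_{i ≥ 1}` such that, for every
`n ≥ 1`, the coefficient of `X^n` in `∏_{i=1}^{n} (1 - X^i)^{b_i}` equals `a_n`; i.e.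
`1 + Σ a_i X^i = ∏_{i ≥ 1} (1 - X^i)^{b_i}` coefficientwise. -/
theorem statement0 (a : ℕ → ℤ) :
    ∃ b : ℕ → ℤ,
      (∀ n : ℕ, 1 ≤ n →
        (PowerSeries.coeff (R := ℤ) n)
          (∏ i ∈ Finset.Icc 1 n,
            ringZpow (1 - (PowerSeries.X : PowerSeries ℤ) ^ i) (b i)) = a n) ∧
      (∀ b' : ℕ → ℤ,
        (∀ n : ℕ, 1 ≤ n →
          (PowerSeries.coeff (R := ℤ) n)
            (∏ i ∈ Finset.Icc 1 n,
              ringZpow (1 - (PowerSeries.X : PowerSeries ℤ) ^ i) (b' i)) = a n) →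
        ∀ i : ℕ, 1 ≤ i → b' i = b i) := by
  refine ⟨bSeq a, ?_, ?_⟩
  · intro n hn
    rw [stepB (bSeq a) n hn, bSeq_eq a n]
    ring
  · intro b' hb'
    intro i
    induction i using Nat.strong_induction_on with
    | _ i ih =>
      intro hi
      have h1 := hb' i hi
      rw [stepB b' i hi] at h1
      have hcongr :
          (∏ j ∈ Icc 1 (i - 1), ringZpow (1 - (X : ℤX) ^ j) (b' j))
            = ∏ j ∈ Icc 1 (i - 1), ringZpow (1 - (X : ℤX) ^ j) (bSeq a j) := by
        apply Finset.prod_congr rfl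
        intro j hj
        simp only [Finset.mem_Icc] at hj
        rw [ih j (by omega) (by omega)]
      rw [hcongr] at h1
      rw [bSeq_eq a i]
      omega
end

section
/- Let (a_i)_{i≥1} be a sequence of even integers and let f = 1 + Σ_{i≥1} a_i X^i ∈ ℤ⟦X⟧. Then there exists a unique sequence of integers (b_i)_{i≥1} such that f = Π_{i≥1} ((1 − X^i)·(1 + X^i)^{-1})^{b_i}, coefficientwise: for every n ≥ 1, the coefficient of X^n in the finite product Π_{i=1}^{n} ((1 − X^i)·(1 + X^i)^{-1})^{b_i} equals a_n. Conversely, for any sequence of integers (b_i)_{i≥1}, every positive-degree coefficient of the (coefficientwise) infinite product Π_{i≥1} ((1 − X^i)·(1 + X^i)^{-1})^{b_i} is an even integer. -/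
/-- The factor `(1 - X^i) · (1 + X^i)⁻¹` in `ℤ⟦X⟧`. -/
noncomputable def minusOverPlus (i : ℕ) : PowerSeries ℤ :=
  (1 - PowerSeries.X ^ i) * Ring.inverse (1 + PowerSeries.X ^ i)

open PowerSeries Finset

lemma ringZpow_unit {R : Type*} [MonoidWithZero R] {f : R} (h : IsUnit f) (m : ℤ) :
    ringZpow f m = ↑(h.unit ^ m) := by
  rcases le_or_gt 0 m with hm | hm
  · rw [ringZpow, if_pos hm]
    have h2 : h.unit ^ m = h.unit ^ m.toNat := by
      rw [← zpow_natCast]; congr 1; omega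
    rw [h2, Units.val_pow_eq_pow_val, h.unit_spec]
  · rw [ringZpow, if_neg (not_le.mpr hm)]
    have h1 : Ring.inverse f = ↑h.unit⁻¹ := by
      conv_lhs => rw [← h.unit_spec]
      exact Ring.inverse_unit h.unit
    have h2 : h.unit ^ m = h.unit⁻¹ ^ (-m).toNat := by
      rw [inv_pow, ← zpow_natCast, ← zpow_neg]; congr 1; omega
    rw [h1, h2, Units.val_pow_eq_pow_val]

/-- `f ≡ 1 (mod X^n)` -/
def OneMod (n : ℕ) (f : PowerSeries ℤ) : Prop :=
  PowerSeries.constantCoeff (R := ℤ) f = 1 ∧ ∀ j, 0 < j → j < n → PowerSeries.coeff (R := ℤ) j f = 0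

lemma coeff_mul_oneMod {n : ℕ} {f g : PowerSeries ℤ} (hf : OneMod n f)
    (hg : PowerSeries.constantCoeff (R := ℤ) g = 1) {j : ℕ} (hj0 : 0 < j) (hjn : j ≤ n) :
    PowerSeries.coeff (R := ℤ) j (f * g) = PowerSeries.coeff (R := ℤ) j f + PowerSeries.coeff (R := ℤ) j g := by
  rw [coeff_mul, Finset.Nat.sum_antidiagonal_eq_sum_range_succ_mk, Finset.sum_range_succ]
  have h0 : ∑ k ∈ Finset.range j, (PowerSeries.coeff (R := ℤ) k f) * (PowerSeries.coeff (R := ℤ) (j - k) g)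
      = PowerSeries.coeff (R := ℤ) j g := by
    rw [Finset.sum_eq_single 0]
    · simp [coeff_zero_eq_constantCoeff, hf.1]
    · intro k hk hk0
      rw [hf.2 k (Nat.pos_of_ne_zero hk0) (lt_of_lt_of_le (Finset.mem_range.mp hk) hjn),
        zero_mul]
    · intro h; exact absurd (Finset.mem_range.mpr hj0) h
  rw [h0]
  simp [coeff_zero_eq_constantCoeff, hg, add_comm]

lemma OneMod.mul {n : ℕ} {f g : PowerSeries ℤ} (hf : OneMod n f) (hg : OneMod n g) :
    OneMod n (f * g) := by
  refine ⟨by rw [map_mul, hf.1, hg.1, one_mul], fun j hj0 hjn => ?_⟩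
  rw [coeff_mul_oneMod hf hg.1 hj0 (le_of_lt hjn), hf.2 j hj0 hjn, hg.2 j hj0 hjn, add_zero]

lemma oneMod_one (n : ℕ) : OneMod n (1 : PowerSeries ℤ) :=
  ⟨map_one _, fun j hj0 _ => by simp [coeff_one, Nat.pos_iff_ne_zero.mp hj0]⟩

lemma coeff_inv_unit {n : ℕ} {u : (PowerSeries ℤ)ˣ} (hu : OneMod n (↑u)) :
    OneMod n (↑u⁻¹ : PowerSeries ℤ) ∧
      ∀ j, 0 < j → j ≤ n → PowerSeries.coeff (R := ℤ) j (↑u⁻¹ : PowerSeries ℤ)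
        = -PowerSeries.coeff (R := ℤ) j (↑u : PowerSeries ℤ) := by
  have hc : PowerSeries.constantCoeff (R := ℤ) (↑u⁻¹ : PowerSeries ℤ) = 1 := by
    have := congrArg (PowerSeries.constantCoeff (R := ℤ)) u.mul_inv
    rw [map_mul, hu.1, one_mul, map_one] at this
    exact this
  have key : ∀ j, 0 < j → j ≤ n → PowerSeries.coeff (R := ℤ) j (↑u⁻¹ : PowerSeries ℤ)
      = -PowerSeries.coeff (R := ℤ) j (↑u : PowerSeries ℤ) := by
    intro j hj0 hjn
    have := coeff_mul_oneMod hu hc hj0 hjn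
    rw [Units.mul_inv, coeff_one, if_neg (Nat.pos_iff_ne_zero.mp hj0)] at this
    linarith
  exact ⟨⟨hc, fun j hj0 hjn => by
    rw [key j hj0 (le_of_lt hjn), hu.2 j hj0 hjn, neg_zero]⟩, key⟩

lemma oneMod_zpow {n : ℕ} (hn : 0 < n) {u : (PowerSeries ℤ)ˣ} (hu : OneMod n (↑u)) (m : ℤ) :
    OneMod n (↑(u ^ m) : PowerSeries ℤ) ∧
      PowerSeries.coeff (R := ℤ) n (↑(u ^ m) : PowerSeries ℤ)
        = m * PowerSeries.coeff (R := ℤ) n (↑u : PowerSeries ℤ) := by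
  have hnat : ∀ k : ℕ, OneMod n (↑(u ^ k) : PowerSeries ℤ) ∧
      PowerSeries.coeff (R := ℤ) n (↑(u ^ k) : PowerSeries ℤ)
        = (k : ℤ) * PowerSeries.coeff (R := ℤ) n (↑u : PowerSeries ℤ) := by
    intro k
    induction k with
    | zero => simpa using ⟨oneMod_one n, by simp [coeff_one, Nat.pos_iff_ne_zero.mp hn]⟩
    | succ k ih =>
      have hmul : (↑(u ^ (k+1)) : PowerSeries ℤ) = ↑(u ^ k) * ↑u := by
        rw [pow_succ]; rfl
      constructor
      · rw [hmul]; exact ih.1.mul hu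
      · rw [hmul, coeff_mul_oneMod ih.1 hu.1 hn le_rfl, ih.2]
        push_cast; ring
  rcases le_or_gt 0 m with hm | hm
  · have : u ^ m = u ^ m.toNat := by
      rw [← zpow_natCast]; congr 1; omega
    rw [this]
    have := hnat m.toNat
    rw [this.2]
    refine ⟨this.1, by rw [Int.toNat_of_nonneg hm]⟩
  · have hk : u ^ m = (u ^ (-m).toNat)⁻¹ := by
      rw [← zpow_natCast, ← zpow_neg]; congr 1; omega
    rw [hk]
    have h1 := hnat (-m).toNat
    have h2 := coeff_inv_unit h1.1
    refine ⟨h2.1, ?_⟩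
    rw [h2.2 n hn le_rfl, h1.2]
    have : ((-m).toNat : ℤ) = -m := by omega
    rw [this]; ring

lemma isUnit_one_add_X_pow {S : Type*} [CommRing S] (i : ℕ) (hi : 1 ≤ i) :
    IsUnit (1 + PowerSeries.X ^ i : PowerSeries S) := by
  rw [PowerSeries.isUnit_iff_constantCoeff, map_add, map_one, map_pow,
    constantCoeff_X, zero_pow (by omega), add_zero]
  exact isUnit_one

lemma isUnit_one_sub_X_pow (i : ℕ) (hi : 1 ≤ i) :
    IsUnit (1 - PowerSeries.X ^ i : PowerSeries ℤ) := by
  rw [PowerSeries.isUnit_iff_constantCoeff, map_sub, map_one, map_pow,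
    constantCoeff_X, zero_pow (by omega), sub_zero]
  exact isUnit_one

lemma isUnit_mop (i : ℕ) (hi : 1 ≤ i) : IsUnit (minusOverPlus i) := by
  have h1 := isUnit_one_sub_X_pow i hi
  have h2 := isUnit_one_add_X_pow (S := ℤ) i hi
  exact h1.mul (by rw [← h2.unit_spec, Ring.inverse_unit]; exact (h2.unit⁻¹).isUnit)

lemma oneMod_one_add_X_pow (i : ℕ) (hi : 1 ≤ i) :
    OneMod i (1 + PowerSeries.X ^ i : PowerSeries ℤ) := by
  constructor
  · rw [map_add, map_one, map_pow, constantCoeff_X, zero_pow (by omega), add_zero]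
  · intro j hj0 hji
    rw [map_add, coeff_one, if_neg (Nat.pos_iff_ne_zero.mp hj0), coeff_X_pow,
      if_neg (by omega), add_zero]

lemma oneMod_one_sub_X_pow (i : ℕ) (hi : 1 ≤ i) :
    OneMod i (1 - PowerSeries.X ^ i : PowerSeries ℤ) := by
  constructor
  · rw [map_sub, map_one, map_pow, constantCoeff_X, zero_pow (by omega), sub_zero]
  · intro j hj0 hji
    rw [map_sub, coeff_one, if_neg (Nat.pos_iff_ne_zero.mp hj0), coeff_X_pow,
      if_neg (by omega), sub_zero]

lemma oneMod_mop (i : ℕ) (hi : 1 ≤ i) :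
    OneMod i (minusOverPlus i) ∧ PowerSeries.coeff (R := ℤ) i (minusOverPlus i) = -2 := by
  have h2 := isUnit_one_add_X_pow (S := ℤ) i hi
  have hu : OneMod i (↑h2.unit : PowerSeries ℤ) := by rw [h2.unit_spec]; exact oneMod_one_add_X_pow i hi
  have hinv := coeff_inv_unit hu
  have hrw : Ring.inverse (1 + PowerSeries.X ^ i : PowerSeries ℤ) = ↑h2.unit⁻¹ := by
    conv_lhs => rw [← h2.unit_spec]
    exact Ring.inverse_unit h2.unit
  have hs := oneMod_one_sub_X_pow i hi
  constructor
  · rw [minusOverPlus, hrw]; exact hs.mul hinv.1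
  · rw [minusOverPlus, hrw, coeff_mul_oneMod hs hinv.1.1 (by omega) le_rfl,
      hinv.2 i (by omega) le_rfl]
    rw [h2.unit_spec]
    rw [map_sub, map_add, coeff_one, if_neg (by omega), coeff_X_pow, if_pos rfl]
    simp

lemma oneMod_zpow_mop (i : ℕ) (hi : 1 ≤ i) (m : ℤ) :
    OneMod i (ringZpow (minusOverPlus i) m) ∧
      PowerSeries.coeff (R := ℤ) i (ringZpow (minusOverPlus i) m) = -2 * m := by
  have h := isUnit_mop i hi
  have hu : OneMod i (↑h.unit : PowerSeries ℤ) := by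
    rw [h.unit_spec]; exact (oneMod_mop i hi).1
  have z := oneMod_zpow (by omega : 0 < i) hu m
  rw [ringZpow_unit h]
  refine ⟨z.1, ?_⟩
  rw [z.2, h.unit_spec, (oneMod_mop i hi).2]; ring

lemma constCoeff_P (b : ℕ → ℤ) (m : ℕ) :
    PowerSeries.constantCoeff (R := ℤ) (∏ i ∈ Finset.Icc 1 m, ringZpow (minusOverPlus i) (b i)) = 1 := by
  rw [map_prod]
  refine Finset.prod_eq_one fun i hi => ?_
  exact (oneMod_zpow_mop i (Finset.mem_Icc.mp hi).1 (b i)).1.1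

lemma coeff_P_succ (b : ℕ → ℤ) (n : ℕ) (hn : 1 ≤ n) :
    PowerSeries.coeff (R := ℤ) n (∏ i ∈ Finset.Icc 1 n, ringZpow (minusOverPlus i) (b i))
      = PowerSeries.coeff (R := ℤ) n
          (∏ i ∈ Finset.Icc 1 (n-1), ringZpow (minusOverPlus i) (b i)) - 2 * b n := by
  obtain ⟨m, rfl⟩ : ∃ m, n = m + 1 := ⟨n - 1, by omega⟩
  rw [Finset.prod_Icc_succ_top (by omega : 1 ≤ m + 1), mul_comm,
    coeff_mul_oneMod (oneMod_zpow_mop (m+1) (by omega) (b (m+1))).1 (constCoeff_P b m)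
      (by omega) le_rfl,
    (oneMod_zpow_mop (m+1) (by omega) (b (m+1))).2]
  simp only [Nat.add_sub_cancel]
  ring

lemma map2_mop (i : ℕ) (hi : 1 ≤ i) :
    PowerSeries.map (Int.castRingHom (ZMod 2)) (minusOverPlus i) = 1 := by
  have h2 := isUnit_one_add_X_pow (S := ℤ) i hi
  have hrw : Ring.inverse (1 + PowerSeries.X ^ i : PowerSeries ℤ) = ↑h2.unit⁻¹ := by
    conv_lhs => rw [← h2.unit_spec]
    exact Ring.inverse_unit h2.unit
  rw [minusOverPlus, hrw, map_mul]
  have hmul := congrArg (PowerSeries.map (Int.castRingHom (ZMod 2))) h2.mul_val_inv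
  rw [map_mul, map_one] at hmul
  have heq : PowerSeries.map (Int.castRingHom (ZMod 2)) (1 - PowerSeries.X ^ i)
      = PowerSeries.map (Int.castRingHom (ZMod 2)) (1 + PowerSeries.X ^ i) := by
    rw [map_sub, map_add, map_one, map_pow, PowerSeries.map_X]
    have h2z : (2 : PowerSeries (ZMod 2)) = 0 := by
      rw [← map_ofNat (PowerSeries.C (R := ZMod 2)) 2, show (2 : ZMod 2) = 0 by decide, map_zero]
    have h3 : (1 + PowerSeries.X ^ i : PowerSeries (ZMod 2))
        - (1 - PowerSeries.X ^ i) = 0 := by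
      rw [show (1 + PowerSeries.X ^ i : PowerSeries (ZMod 2)) - (1 - PowerSeries.X ^ i)
        = 2 * PowerSeries.X ^ i by ring, h2z, zero_mul]
    exact (eq_of_sub_eq_zero h3).symm
  rw [heq, hmul]

lemma map2_zpow (i : ℕ) (hi : 1 ≤ i) (m : ℤ) :
    PowerSeries.map (Int.castRingHom (ZMod 2)) (ringZpow (minusOverPlus i) m) = 1 := by
  have h := isUnit_mop i hi
  rw [ringZpow_unit h]
  have hone : Units.map (↑(PowerSeries.map (Int.castRingHom (ZMod 2))) :
      PowerSeries ℤ →* PowerSeries (ZMod 2)) h.unit = 1 := by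
    apply Units.ext
    rw [Units.coe_map]
    simp only [MonoidHom.coe_coe, Units.val_one]
    rw [h.unit_spec]
    exact map2_mop i hi
  calc PowerSeries.map (Int.castRingHom (ZMod 2)) (↑(h.unit ^ m) : PowerSeries ℤ)
      = ↑(Units.map (↑(PowerSeries.map (Int.castRingHom (ZMod 2))) :
            PowerSeries ℤ →* PowerSeries (ZMod 2)) (h.unit ^ m)) := by
        rw [Units.coe_map]; rfl
    _ = ↑((Units.map (↑(PowerSeries.map (Int.castRingHom (ZMod 2))) :
            PowerSeries ℤ →* PowerSeries (ZMod 2)) h.unit) ^ m) := by rw [map_zpow]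
    _ = 1 := by rw [hone]; simp

lemma even_coeff_prod (b : ℕ → ℤ) (s : Finset ℕ) (hs : ∀ i ∈ s, 1 ≤ i)
    (n : ℕ) (hn : 1 ≤ n) :
    Even (PowerSeries.coeff (R := ℤ) n (∏ i ∈ s, ringZpow (minusOverPlus i) (b i))) := by
  have hφ : PowerSeries.map (Int.castRingHom (ZMod 2))
      (∏ i ∈ s, ringZpow (minusOverPlus i) (b i)) = 1 := by
    rw [map_prod]
    exact Finset.prod_eq_one fun i hi => map2_zpow i (hs i hi) (b i)
  have := congrArg (PowerSeries.coeff (R := ZMod 2) n) hφ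
  rw [PowerSeries.coeff_map, coeff_one, if_neg (by omega)] at this
  simp only [Int.castRingHom, RingHom.coe_mk, MonoidHom.coe_mk, OneHom.coe_mk] at this
  have hd : ((2 : ℕ) : ℤ) ∣ PowerSeries.coeff (R := ℤ) n (∏ i ∈ s, ringZpow (minusOverPlus i) (b i)) :=
    (ZMod.intCast_zmod_eq_zero_iff_dvd _ 2).mp this
  rcases hd with ⟨k, hk⟩
  exact ⟨k, by omega⟩

noncomputable def bseq (a : ℕ → ℤ) (n : ℕ) : ℤ :=
  (PowerSeries.coeff (R := ℤ) n (∏ i ∈ (Finset.Icc 1 (n-1)).attach,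
      ringZpow (minusOverPlus i.1) (bseq a i.1)) - a n) / 2
termination_by n
decreasing_by
  have := Finset.mem_Icc.mp i.2; omega

lemma bseq_eq (a : ℕ → ℤ) (n : ℕ) :
    bseq a n = (PowerSeries.coeff (R := ℤ) n (∏ i ∈ Finset.Icc 1 (n-1),
      ringZpow (minusOverPlus i) (bseq a i)) - a n) / 2 := by
  rw [bseq, Finset.prod_attach (Finset.Icc 1 (n-1)) (fun i => ringZpow (minusOverPlus i) (bseq a i))]

lemma bseq_spec (a : ℕ → ℤ) (ha : ∀ i : ℕ, 1 ≤ i → Even (a i)) (n : ℕ) (hn : 1 ≤ n) :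
    PowerSeries.coeff (R := ℤ) n
      (∏ i ∈ Finset.Icc 1 n, ringZpow (minusOverPlus i) (bseq a i)) = a n := by
  rw [coeff_P_succ _ n hn]
  set c := PowerSeries.coeff (R := ℤ) n
    (∏ i ∈ Finset.Icc 1 (n-1), ringZpow (minusOverPlus i) (bseq a i)) with hc
  have hce : Even c := even_coeff_prod _ _ (fun i hi => (Finset.mem_Icc.mp hi).1) n hn
  have hb : bseq a n = (c - a n) / 2 := bseq_eq a n
  have hd : (2 : ℤ) ∣ (c - a n) := by
    rcases hce with ⟨x, hx⟩; rcases ha n hn with ⟨y, hy⟩; exact ⟨x - y, by omega⟩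
  have := Int.mul_ediv_cancel' hd
  omega

lemma bseq_uniq (a : ℕ → ℤ) (ha : ∀ i : ℕ, 1 ≤ i → Even (a i)) (b' : ℕ → ℤ)
    (hb' : ∀ n : ℕ, 1 ≤ n → PowerSeries.coeff (R := ℤ) n
      (∏ i ∈ Finset.Icc 1 n, ringZpow (minusOverPlus i) (b' i)) = a n) :
    ∀ n : ℕ, 1 ≤ n → b' n = bseq a n := by
  intro n
  induction n using Nat.strong_induction_on with
  | _ n ih =>
    intro hn
    have hP : (∏ i ∈ Finset.Icc 1 (n-1), ringZpow (minusOverPlus i) (b' i))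
        = ∏ i ∈ Finset.Icc 1 (n-1), ringZpow (minusOverPlus i) (bseq a i) := by
      refine Finset.prod_congr rfl fun i hi => ?_
      have hm := Finset.mem_Icc.mp hi
      rw [ih i (by omega) (by omega)]
    have e1 := hb' n hn
    have e2 := bseq_spec a ha n hn
    rw [coeff_P_succ b' n hn, hP] at e1
    rw [coeff_P_succ _ n hn] at e2
    omega


/-- Lemma 2.2 (Transform2): if `(a_i)_{i ≥ 1}` is a sequence of even integers, then there is a
unique integer sequence `(b_i)_{i ≥ 1}` with
`1 + Σ a_i X^i = ∏_{i ≥ 1} ((1 - X^i)(1 + X^i)⁻¹)^{b_i}` coefficientwise, i.e. for every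
`n ≥ 1` the coefficient of `X^n` in `∏_{i=1}^{n} ((1 - X^i)(1 + X^i)⁻¹)^{b_i}` equals `a_n`.
Conversely, for any integer sequence `(b_i)` every positive-degree coefficient of the
coefficientwise infinite product is even. -/
theorem statement1 (a : ℕ → ℤ) (ha : ∀ i : ℕ, 1 ≤ i → Even (a i)) :
    (∃ b : ℕ → ℤ,
      (∀ n : ℕ, 1 ≤ n →
        (PowerSeries.coeff (R := ℤ) n)
          (∏ i ∈ Finset.Icc 1 n, ringZpow (minusOverPlus i) (b i)) = a n) ∧
      (∀ b' : ℕ → ℤ,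
        (∀ n : ℕ, 1 ≤ n →
          (PowerSeries.coeff (R := ℤ) n)
            (∏ i ∈ Finset.Icc 1 n, ringZpow (minusOverPlus i) (b' i)) = a n) →
        ∀ i : ℕ, 1 ≤ i → b' i = b i)) ∧
    (∀ b : ℕ → ℤ, ∀ n : ℕ, 1 ≤ n →
      Even ((PowerSeries.coeff (R := ℤ) n)
        (∏ i ∈ Finset.Icc 1 n, ringZpow (minusOverPlus i) (b i)))) := by
  refine ⟨⟨bseq a, fun n hn => bseq_spec a ha n hn,
    fun b' hb' i hi => bseq_uniq a ha b' hb' i hi⟩,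
    fun b n hn => even_coeff_prod b _ (fun i hi => (Finset.mem_Icc.mp hi).1) n hn⟩
end

section
/- Let (a_{i,j})_{i,j≥1} be a family of integers and let f = 1 + Σ_{i,j≥1} a_{i,j} U^i T^j be the corresponding formal power series in two variables over ℤ. Then there exists a unique family of integers (b_{i,j})_{i,j≥1} such that f = Π_{i,j≥1} (1 − U^i T^j)^{b_{i,j}}, where the infinite product is understood coefficientwise: for all m, n ≥ 1, the coefficient of U^m T^n in the finite product Π_{1≤i≤m, 1≤j≤n} (1 − U^i T^j)^{b_{i,j}} equals a_{m,n}. -/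
/-- The series `ℤ⟦U,T⟧` of formal power series in two variables, with `U = X 0`, `T = X 1`. -/
noncomputable abbrev UT : Type := MvPowerSeries (Fin 2) ℤ

/-- The coefficient of `U^m T^n`. -/
noncomputable def coeffUT (m n : ℕ) : UT →ₗ[ℤ] ℤ :=
  MvPowerSeries.coeff (Finsupp.single (0 : Fin 2) m + Finsupp.single (1 : Fin 2) n)

open MvPowerSeries Finset

lemma pow_structure (x : UT) (k : ℕ) :
    ∃ g : UT, (1 - x) ^ k = 1 - (k : UT) * x + x ^ 2 * g := by
  induction k with
  | zero => exact ⟨0, by simp⟩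
  | succ k ih =>
    obtain ⟨g, hg⟩ := ih
    refine ⟨g + (k : UT) - x * g, ?_⟩
    rw [pow_succ, hg]
    push_cast
    ring

lemma inv_structure (x : UT) (hx : constantCoeff (σ := Fin 2) (R := ℤ) x = 0) (k : ℕ) :
    ∃ g : UT, (Ring.inverse (1 - x)) ^ k = 1 + (k : UT) * x + x ^ 2 * g := by
  have hu : IsUnit (1 - x) := by
    refine IsUnit.of_mul_eq_one (invOfUnit (1 - x) 1) (mul_invOfUnit _ _ ?_)
    simp [hx]
  have hy : (1 - x) * Ring.inverse (1 - x) = 1 := Ring.mul_inverse_cancel _ hu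
  set y := Ring.inverse (1 - x) with hydef
  have hy2 : y = 1 + x + x ^ 2 * y := by
    have h1 : y - x * y = 1 := by linear_combination hy
    linear_combination h1 + x * h1 - hy + hy
  induction k with
  | zero => exact ⟨0, by simp⟩
  | succ k ih =>
    obtain ⟨g, hg⟩ := ih
    refine ⟨y + (k : UT) + (k : UT) * x * y + g + x * g + x ^ 2 * g * y, ?_⟩
    rw [pow_succ, hg]
    push_cast
    linear_combination (1 + (k : UT) * x + x ^ 2 * g) * hy2

lemma ringZpow_structure (x : UT) (hx : constantCoeff (σ := Fin 2) (R := ℤ) x = 0) (c : ℤ) :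
    ∃ g : UT, ringZpow (1 - x) c = 1 - (c : UT) * x + x ^ 2 * g := by
  rcases le_or_gt 0 c with h | h
  · obtain ⟨g, hg⟩ := pow_structure x c.toNat
    refine ⟨g, ?_⟩
    rw [ringZpow, if_pos h, hg]
    have h1 : ((c.toNat : ℕ) : UT) = ((c : ℤ) : UT) := by
      rw [← Int.cast_natCast, Int.toNat_of_nonneg h]
    rw [h1]
  · obtain ⟨g, hg⟩ := inv_structure x hx (-c).toNat
    refine ⟨g, ?_⟩
    rw [ringZpow, if_neg (by omega), hg]
    have h1 : (((-c).toNat : ℕ) : UT) = ((-c : ℤ) : UT) := by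
      rw [← Int.cast_natCast, Int.toNat_of_nonneg (by omega : (0:ℤ) ≤ -c)]
    rw [h1]
    push_cast
    ring

lemma constantCoeff_XX (i j : ℕ) (hi : 1 ≤ i) :
    constantCoeff (σ := Fin 2) (R := ℤ)
      (MvPowerSeries.X (0 : Fin 2) ^ i * MvPowerSeries.X (1 : Fin 2) ^ j) = 0 := by
  simp [map_mul, map_pow, constantCoeff_X, zero_pow (by omega : i ≠ 0)]

lemma constantCoeff_ringZpow (i j : ℕ) (hi : 1 ≤ i) (c : ℤ) :
    constantCoeff (σ := Fin 2) (R := ℤ)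
      (ringZpow (1 - MvPowerSeries.X (0 : Fin 2) ^ i * MvPowerSeries.X (1 : Fin 2) ^ j) c)
      = 1 := by
  obtain ⟨g, hg⟩ := ringZpow_structure _ (constantCoeff_XX i j hi) c
  rw [hg]
  simp [map_add, map_sub, map_mul, map_pow, constantCoeff_XX i j hi,
    zero_pow (two_ne_zero), map_one]

lemma key_coeff (m n : ℕ) (hm : 1 ≤ m) (hn : 1 ≤ n) (b : ℕ → ℕ → ℤ) :
    coeffUT m n
      (∏ i ∈ Finset.Icc 1 m, ∏ j ∈ Finset.Icc 1 n,
        ringZpow (1 - MvPowerSeries.X (0 : Fin 2) ^ i * MvPowerSeries.X (1 : Fin 2) ^ j)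
          (b i j))
    = coeffUT m n
        (∏ p ∈ (Finset.Icc 1 m ×ˢ Finset.Icc 1 n).erase (m, n),
          ringZpow (1 - MvPowerSeries.X (0 : Fin 2) ^ p.1 * MvPowerSeries.X (1 : Fin 2) ^ p.2)
            (b p.1 p.2)) - b m n := by
  classical
  set d : Fin 2 →₀ ℕ := Finsupp.single (0 : Fin 2) m + Finsupp.single (1 : Fin 2) n with hd
  set x : UT := MvPowerSeries.X (0 : Fin 2) ^ m * MvPowerSeries.X (1 : Fin 2) ^ n with hxdef
  have hxmono : x = monomial d 1 := by
    rw [hxdef, X_pow_eq, X_pow_eq, monomial_mul_monomial, one_mul, hd]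
  have hmem : ((m, n) : ℕ × ℕ) ∈ Finset.Icc 1 m ×ˢ Finset.Icc 1 n := by
    simp [Finset.mem_product, Finset.mem_Icc, hm, hn]
  rw [← Finset.prod_product'
    (f := fun i j => ringZpow
      (1 - MvPowerSeries.X (0 : Fin 2) ^ i * MvPowerSeries.X (1 : Fin 2) ^ j) (b i j)),
    ← Finset.prod_erase_mul _ _ hmem]
  set P : UT := ∏ p ∈ (Finset.Icc 1 m ×ˢ Finset.Icc 1 n).erase (m, n),
    ringZpow (1 - MvPowerSeries.X (0 : Fin 2) ^ p.1 * MvPowerSeries.X (1 : Fin 2) ^ p.2)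
      (b p.1 p.2) with hP
  have hP0 : constantCoeff (σ := Fin 2) (R := ℤ) P = 1 := by
    rw [hP, map_prod]
    refine Finset.prod_eq_one fun p hp => ?_
    have hp1 : 1 ≤ p.1 := by
      have := Finset.mem_of_mem_erase hp
      simp only [Finset.mem_product, Finset.mem_Icc] at this
      exact this.1.1
    exact constantCoeff_ringZpow p.1 p.2 hp1 (b p.1 p.2)
  obtain ⟨g, hg⟩ := ringZpow_structure x (constantCoeff_XX m n hm) (b m n)
  rw [hg]
  have expand : P * (1 - ((b m n : ℤ) : UT) * x + x ^ 2 * g)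
      = P + (b m n) • (-(P * x)) + monomial (d + d) (1 : ℤ) * (g * P) := by
    have hx2 : x ^ 2 = monomial (d + d) (1 : ℤ) := by
      rw [hxmono, sq, monomial_mul_monomial, one_mul]
    rw [zsmul_eq_mul]
    rw [← hx2]
    ring
  rw [expand]
  have hcoe : ∀ f : UT, coeffUT m n f = MvPowerSeries.coeff d f := fun f => rfl
  rw [map_add, map_add, map_smul, hcoe, hcoe, hcoe]
  have h1 : MvPowerSeries.coeff d (P * x) = 1 := by
    rw [hxmono, coeff_mul_monomial, if_pos le_rfl, tsub_self,
      coeff_zero_eq_constantCoeff_apply, hP0, mul_one]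
  have h2 : MvPowerSeries.coeff d (monomial (d + d) (1 : ℤ) * (g * P)) = 0 := by
    rw [coeff_monomial_mul, if_neg]
    intro hle
    have := hle 0
    simp [hd, Finsupp.single_apply] at this
    omega
  rw [map_neg, h1, h2, smul_eq_mul]
  ring

noncomputable def bfun (a : ℕ → ℕ → ℤ) : ℕ → ℕ → ℤ := fun m n =>
  if 1 ≤ m ∧ 1 ≤ n then
    coeffUT m n
      (∏ p ∈ ((Finset.Icc 1 m ×ˢ Finset.Icc 1 n).erase (m, n)).attach,
        ringZpow (1 - MvPowerSeries.X (0 : Fin 2) ^ (p : ℕ × ℕ).1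
            * MvPowerSeries.X (1 : Fin 2) ^ (p : ℕ × ℕ).2)
          (bfun a (p : ℕ × ℕ).1 (p : ℕ × ℕ).2)) - a m n
  else 0
termination_by m n => m + n
decreasing_by
  have hp := p.2
  simp only [Finset.mem_erase, Finset.mem_product, Finset.mem_Icc, ne_eq, Prod.ext_iff, not_and] at hp
  omega

lemma bfun_eq (a : ℕ → ℕ → ℤ) (m n : ℕ) (hm : 1 ≤ m) (hn : 1 ≤ n) :
    bfun a m n =
      coeffUT m n
        (∏ p ∈ (Finset.Icc 1 m ×ˢ Finset.Icc 1 n).erase (m, n),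
          ringZpow (1 - MvPowerSeries.X (0 : Fin 2) ^ p.1 * MvPowerSeries.X (1 : Fin 2) ^ p.2)
            (bfun a p.1 p.2)) - a m n := by
  rw [bfun.eq_def a m n, if_pos ⟨hm, hn⟩,
    Finset.prod_attach _ (fun q : ℕ × ℕ =>
      ringZpow (1 - MvPowerSeries.X (0 : Fin 2) ^ q.1 * MvPowerSeries.X (1 : Fin 2) ^ q.2)
        (bfun a q.1 q.2))]


/-- Lemma 3.1 (qTransform1): given any doubly-indexed family of integers `(a_{i,j})_{i,j ≥ 1}`,
there exists a unique family of integers `(b_{i,j})_{i,j ≥ 1}` such that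
`1 + Σ a_{i,j} U^i T^j = ∏_{i,j ≥ 1} (1 - U^i T^j)^{b_{i,j}}` coefficientwise: for all
`m, n ≥ 1` the coefficient of `U^m T^n` in the finite product
`∏_{1 ≤ i ≤ m} ∏_{1 ≤ j ≤ n} (1 - U^i T^j)^{b_{i,j}}` equals `a_{m,n}`. -/
theorem statement3 (a : ℕ → ℕ → ℤ) :
    ∃ b : ℕ → ℕ → ℤ,
      (∀ m n : ℕ, 1 ≤ m → 1 ≤ n →
        coeffUT m n
          (∏ i ∈ Finset.Icc 1 m, ∏ j ∈ Finset.Icc 1 n,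
            ringZpow (1 - MvPowerSeries.X (0 : Fin 2) ^ i * MvPowerSeries.X (1 : Fin 2) ^ j)
              (b i j)) = a m n) ∧
      (∀ b' : ℕ → ℕ → ℤ,
        (∀ m n : ℕ, 1 ≤ m → 1 ≤ n →
          coeffUT m n
            (∏ i ∈ Finset.Icc 1 m, ∏ j ∈ Finset.Icc 1 n,
              ringZpow (1 - MvPowerSeries.X (0 : Fin 2) ^ i * MvPowerSeries.X (1 : Fin 2) ^ j)
                (b' i j)) = a m n) →
        ∀ i j : ℕ, 1 ≤ i → 1 ≤ j → b' i j = b i j) := by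

  refine ⟨bfun a, ?_, ?_⟩
  · intro m n hm hn
    rw [key_coeff m n hm hn (bfun a), bfun_eq a m n hm hn]
    ring
  · intro b' hb'
    have main : ∀ k : ℕ, ∀ i j : ℕ, i + j ≤ k → 1 ≤ i → 1 ≤ j → b' i j = bfun a i j := by
      intro k
      induction k with
      | zero => intro i j h hi hj; omega
      | succ k ih =>
        intro i j hk hi hj
        have h1 := hb' i j hi hj
        have h2 : coeffUT i j
            (∏ u ∈ Finset.Icc 1 i, ∏ v ∈ Finset.Icc 1 j,
              ringZpow (1 - MvPowerSeries.X (0 : Fin 2) ^ u * MvPowerSeries.X (1 : Fin 2) ^ v)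
                (bfun a u v)) = a i j := by
          rw [key_coeff i j hi hj (bfun a), bfun_eq a i j hi hj]; ring
        rw [key_coeff i j hi hj b'] at h1
        rw [key_coeff i j hi hj (bfun a)] at h2
        have heq :
            (∏ p ∈ (Finset.Icc 1 i ×ˢ Finset.Icc 1 j).erase (i, j),
              ringZpow
                ((1 : UT) - MvPowerSeries.X (0 : Fin 2) ^ p.1
                  * MvPowerSeries.X (1 : Fin 2) ^ p.2)
                (b' p.1 p.2))
            = ∏ p ∈ (Finset.Icc 1 i ×ˢ Finset.Icc 1 j).erase (i, j),
              ringZpow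
                (1 - MvPowerSeries.X (0 : Fin 2) ^ p.1 * MvPowerSeries.X (1 : Fin 2) ^ p.2)
                (bfun a p.1 p.2) := by
          refine Finset.prod_congr rfl fun p hp => ?_
          simp only [Finset.mem_erase, Finset.mem_product, Finset.mem_Icc, ne_eq,
            Prod.ext_iff, not_and] at hp
          have : b' p.1 p.2 = bfun a p.1 p.2 := by
            refine ih p.1 p.2 (by omega) (by omega) (by omega)
          rw [this]
        rw [heq] at h1
        omega
    intro i j hi hj
    exact main (i + j) i j le_rfl hi hj
end

section
/- Let q ≥ 2 be an integer and let x be a real number with |x| < 1/q. Then the family d ↦ (1 − x^d)^{N(d,q)} (d ≥ 1, real-power exponentiation with positive base) is multipliable, and Π_{d≥1} (1 − x^d)^{N(d,q)} = (1 − qx)/(1 − x). -/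
/-- `N(d,q) = (1/d) Σ_{a ∣ d} μ(a) (q^{d/a} - 1)`. -/
noncomputable def Nfun (d q : ℕ) : ℚ :=
  (1 / (d : ℚ)) *
    ∑ a ∈ d.divisors, ((ArithmeticFunction.moebius a : ℤ) : ℚ) * ((q : ℚ) ^ (d / a) - 1)

open ArithmeticFunction in
lemma necklace_sum (q : ℕ) : ∀ n > 0, ∑ a ∈ Nat.divisors n, (a : ℚ) * Nfun a q = (q : ℚ) ^ n - 1 := by
  rw [ArithmeticFunction.sum_eq_iff_sum_smul_moebius_eq]
  intro n hn
  rw [Nat.sum_divisorsAntidiagonal (f := fun a b => (moebius a : ℤ) • ((q : ℚ) ^ b - 1))]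
  have hn0 : (n : ℚ) ≠ 0 := Nat.cast_ne_zero.mpr hn.ne'
  unfold Nfun
  rw [← mul_assoc, mul_one_div, div_self hn0, one_mul]
  exact Finset.sum_congr rfl fun a _ => by rw [zsmul_eq_mul]

lemma nfun_bound (q d : ℕ) (hq : 1 ≤ q) (hd : 0 < d) : |Nfun d q| ≤ (q : ℚ) ^ d := by
  have hq1 : (1 : ℚ) ≤ q := by exact_mod_cast hq
  have hd0 : (0 : ℚ) < d := by exact_mod_cast hd
  have hcard : (d.divisors.card : ℚ) ≤ d := by
    have : d.divisors ⊆ Finset.Icc 1 d := by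
      intro a ha
      rw [Nat.mem_divisors] at ha
      exact Finset.mem_Icc.mpr ⟨Nat.pos_of_dvd_of_pos ha.1 hd, Nat.le_of_dvd hd ha.1⟩
    have := Finset.card_le_card this
    rw [Nat.card_Icc] at this
    exact_mod_cast this.trans (by omega)
  have hterm : ∀ a ∈ d.divisors,
      |((ArithmeticFunction.moebius a : ℤ) : ℚ) * ((q : ℚ) ^ (d / a) - 1)| ≤ (q : ℚ) ^ d := by
    intro a _
    rw [abs_mul]
    have h1 : |((ArithmeticFunction.moebius a : ℤ) : ℚ)| ≤ 1 := by
      have := ArithmeticFunction.abs_moebius_le_one (n := a)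
      exact_mod_cast (by exact_mod_cast this : (|(ArithmeticFunction.moebius a : ℤ)| : ℚ) ≤ 1)
    have h2 : |(q : ℚ) ^ (d / a) - 1| ≤ (q : ℚ) ^ d := by
      have hp1 : (1 : ℚ) ≤ (q : ℚ) ^ (d / a) := one_le_pow₀ hq1
      rw [abs_of_nonneg (by linarith)]
      have : (q : ℚ) ^ (d / a) ≤ (q : ℚ) ^ d := pow_le_pow_right₀ hq1 (Nat.div_le_self d a)
      linarith
    calc |((ArithmeticFunction.moebius a : ℤ) : ℚ)| * |(q : ℚ) ^ (d / a) - 1|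
        ≤ 1 * (q : ℚ) ^ d := mul_le_mul h1 h2 (abs_nonneg _) zero_le_one
      _ = (q : ℚ) ^ d := one_mul _
  unfold Nfun
  rw [abs_mul, abs_of_nonneg (by positivity : (0:ℚ) ≤ 1 / d)]
  calc 1 / (d : ℚ) * |∑ a ∈ d.divisors, ((ArithmeticFunction.moebius a : ℤ) : ℚ) * ((q : ℚ) ^ (d / a) - 1)|
      ≤ 1 / d * (d.divisors.card • ((q:ℚ) ^ d)) := by
        gcongr
        exact (Finset.abs_sum_le_sum_abs _ _).trans (Finset.sum_le_card_nsmul _ _ _ hterm)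
    _ = 1 / d * (d.divisors.card * (q:ℚ) ^ d) := by rw [nsmul_eq_mul]
    _ ≤ 1 / d * (d * (q:ℚ) ^ d) := by gcongr
    _ = (q:ℚ) ^ d := by field_simp

/-- Lemma 2.3(a): for an integer `q ≥ 2` and a real `x` with `|x| < 1/q`, the family
`d ↦ (1 - x^d)^{N(d,q)}` (over `d ≥ 1`, real-power exponentiation) is multipliable and
`∏_{d ≥ 1} (1 - x^d)^{N(d,q)} = (1 - qx)/(1 - x)`. -/
theorem statement6 (q : ℕ) (hq : 2 ≤ q) (x : ℝ) (hx : |x| < 1 / q) :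
    Multipliable (fun d : ℕ => (1 - x ^ (d + 1)) ^ ((Nfun (d + 1) q : ℚ) : ℝ)) ∧
    ∏' d : ℕ, (1 - x ^ (d + 1)) ^ ((Nfun (d + 1) q : ℚ) : ℝ) = (1 - q * x) / (1 - x) := by
  have hq0 : (0:ℝ) < q := by exact_mod_cast (by omega : 0 < q)
  have hx1 : |x| < 1 := lt_of_lt_of_le hx (by
    rw [div_le_one hq0]; exact_mod_cast (by omega : 1 ≤ q))
  have hqx : |(q:ℝ) * x| < 1 := by
    rw [abs_mul, abs_of_nonneg hq0.le]
    calc (q:ℝ) * |x| < (q:ℝ) * (1/q) := by exact mul_lt_mul_of_pos_left hx hq0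
      _ = 1 := by field_simp
  have hpow : ∀ d : ℕ, |x ^ (d+1)| < 1 := fun d => by
    rw [abs_pow]; exact pow_lt_one₀ (abs_nonneg x) hx1 (Nat.succ_ne_zero d)
  have hpos : ∀ d : ℕ, 0 < 1 - x ^ (d+1) := fun d => by
    have h := (abs_lt.mp (hpow d)).2; linarith
  have h1qx : 0 < 1 - (q:ℝ) * x := by have := (abs_lt.mp hqx).2; linarith
  have h1x : 0 < 1 - x := by have := (abs_lt.mp hx1).2; linarith
  set c : ℕ → ℝ := fun d => ((Nfun (d+1) q : ℚ) : ℝ) with hc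
  set g : ℕ × ℕ → ℝ := fun p => c p.1 * (x ^ ((p.1+1)*(p.2+1)) / ((p.2:ℝ)+1)) with hg
  have hcb : ∀ d : ℕ, |c d| ≤ (q:ℝ)^(d+1) := fun d => by
    have h0 := nfun_bound q (d+1) (by omega) (by omega)
    have h2 : |((Nfun (d+1) q : ℚ) : ℝ)| ≤ (((q:ℚ)^(d+1) : ℚ) : ℝ) := by
      rw [← Rat.cast_abs]; exact_mod_cast h0
    simpa using h2
  set r : ℝ := (q:ℝ) * |x| with hr
  have hr0 : 0 ≤ r := by positivity
  have hr1 : r < 1 := by rwa [abs_mul, abs_of_nonneg hq0.le] at hqx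
  have hgb : ∀ p : ℕ × ℕ, ‖g p‖ ≤ r^(p.1+1) * r^p.2 := by
    rintro ⟨d, k⟩
    have hk1 : (0:ℝ) < (k:ℝ) + 1 := by positivity
    have hk1' : (1:ℝ) ≤ (k:ℝ) + 1 := by linarith [Nat.cast_nonneg (α := ℝ) k]
    have hne : ‖g (d,k)‖ = |c d| * (|x| ^ ((d+1)*(k+1)) / ((k:ℝ)+1)) := by
      simp [hg, abs_mul, abs_div, abs_pow, abs_of_pos hk1]
    have hq1 : (1:ℝ) ≤ (q:ℝ) := by exact_mod_cast (by omega : 1 ≤ q)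
    have hexp1 : d+1 ≤ (d+1)*(k+1) := Nat.le_mul_of_pos_right _ (by omega)
    have hexp2 : d+1+k ≤ (d+1)*(k+1) := by
      have h : k ≤ (d+1)*k := Nat.le_mul_of_pos_left k (by omega)
      rw [Nat.mul_succ]; omega
    rw [hne]
    calc |c d| * (|x| ^ ((d+1)*(k+1)) / ((k:ℝ)+1))
        ≤ (q:ℝ)^(d+1) * (|x| ^ ((d+1)*(k+1)) / 1) := by
          gcongr
          · exact hcb d
      _ = (q:ℝ)^(d+1) * |x| ^ ((d+1)*(k+1)) := by ring
      _ ≤ (q:ℝ)^((d+1)*(k+1)) * |x| ^ ((d+1)*(k+1)) :=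
          mul_le_mul_of_nonneg_right (pow_le_pow_right₀ hq1 hexp1) (by positivity)
      _ = r ^ ((d+1)*(k+1)) := by rw [hr, mul_pow]
      _ ≤ r ^ (d+1+k) := pow_le_pow_of_le_one hr0 hr1.le hexp2
      _ = r^(d+1) * r^k := pow_add r (d+1) k
  have hmaj : Summable (fun p : ℕ × ℕ => r^(p.1+1) * r^p.2) := by
    have h1 : Summable (fun d : ℕ => r^(d+1)) := by
      simpa [pow_succ'] using (summable_geometric_of_lt_one hr0 hr1).mul_left r
    exact h1.mul_of_nonneg (summable_geometric_of_lt_one hr0 hr1)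
      (fun d => by positivity) (fun k => by positivity)
  have hgsum : Summable g := Summable.of_norm_bounded hmaj hgb
  have hgS : HasSum g (∑' p, g p) := hgsum.hasSum
  -- group by d
  have hinner : ∀ d : ℕ, HasSum (fun k => g (d, k)) (c d * (-Real.log (1 - x^(d+1)))) := by
    intro d
    have h := (Real.hasSum_pow_div_log_of_abs_lt_one (hpow d)).mul_left (c d)
    have he : (fun k : ℕ => g (d,k)) = fun k : ℕ => c d * ((x^(d+1))^(k+1) / ((k:ℝ)+1)) := by
      funext k; simp [hg, ← pow_mul]
    rw [he]; exact h
  have hsumd : HasSum (fun d => c d * (-Real.log (1 - x^(d+1)))) (∑' p, g p) :=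
    hgS.prod_fiberwise hinner
  -- group by n = (d+1)(k+1)
  have hfib := hgS.tsum_fiberwise (fun p : ℕ × ℕ => (p.1+1)*(p.2+1))
  have hfibval : ∀ n : ℕ, (∑' b : ((fun p : ℕ × ℕ => (p.1+1)*(p.2+1)) ⁻¹' {n}), g b)
      = ((q:ℝ)^n - 1) * (x^n / (n:ℝ)) := by
    intro n
    have hset : ((fun p : ℕ × ℕ => (p.1+1)*(p.2+1)) ⁻¹' {n})
        = ↑((Nat.divisorsAntidiagonal n).image (fun p => (p.1 - 1, p.2 - 1))) := by
      ext ⟨d, k⟩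
      simp only [Set.mem_preimage, Set.mem_singleton_iff, Finset.coe_image, Set.mem_image,
        Finset.mem_coe, Nat.mem_divisorsAntidiagonal]
      constructor
      · rintro rfl
        exact ⟨(d+1, k+1), ⟨rfl, Nat.mul_ne_zero (Nat.succ_ne_zero d) (Nat.succ_ne_zero k)⟩,
          by simp⟩
      · rintro ⟨⟨a, b⟩, ⟨hab, hn0⟩, hpq⟩
        have ha : a ≠ 0 := by rintro rfl; exact hn0 (by simpa using hab.symm)
        have hb : b ≠ 0 := by rintro rfl; exact hn0 (by simpa using hab.symm)
        have h1 : a - 1 = d := congrArg Prod.fst hpq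
        have h2 : b - 1 = k := congrArg Prod.snd hpq
        have e1 : d + 1 = a := by omega
        have e2 : k + 1 = b := by omega
        rw [e1, e2]; exact hab
    rw [hset, Finset.tsum_subtype'
      ((Nat.divisorsAntidiagonal n).image (fun p => (p.1 - 1, p.2 - 1))) g]
    rcases Nat.eq_zero_or_pos n with rfl | hn
    · simp
    have hinj : ∀ p ∈ Nat.divisorsAntidiagonal n, ∀ p' ∈ Nat.divisorsAntidiagonal n,
        (p.1 - 1, p.2 - 1) = (p'.1 - 1, p'.2 - 1) → p = p' := by
      intro p hp p' hp' h
      obtain ⟨ha, hb⟩ := Nat.ne_zero_of_mem_divisorsAntidiagonal hp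
      obtain ⟨ha', hb'⟩ := Nat.ne_zero_of_mem_divisorsAntidiagonal hp'
      have h1 : p.1 - 1 = p'.1 - 1 := congrArg Prod.fst h
      have h2 : p.2 - 1 = p'.2 - 1 := congrArg Prod.snd h
      exact Prod.ext (by omega) (by omega)
    rw [Finset.sum_image hinj]
    have hterm : ∀ p ∈ Nat.divisorsAntidiagonal n,
        g (p.1 - 1, p.2 - 1) = ((p.1:ℝ) * ((Nfun p.1 q : ℚ):ℝ)) * (x^n / (n:ℝ)) := by
      intro p hp
      obtain ⟨ha, hb⟩ := Nat.ne_zero_of_mem_divisorsAntidiagonal hp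
      have hab := (Nat.mem_divisorsAntidiagonal.mp hp).1
      have e1 : p.1 - 1 + 1 = p.1 := by omega
      have e2 : p.2 - 1 + 1 = p.2 := by omega
      have e3 : ((p.2 - 1 : ℕ) : ℝ) = (p.2 : ℝ) - 1 := by
        rw [Nat.cast_sub (by omega)]; simp
      have hp2 : ((p.2:ℝ)) ≠ 0 := Nat.cast_ne_zero.mpr hb
      have hnn : ((n:ℝ)) ≠ 0 := Nat.cast_ne_zero.mpr hn.ne'
      have hn' : (n:ℝ) = (p.1:ℝ) * (p.2:ℝ) := by exact_mod_cast hab.symm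
      show c (p.1 - 1) * (x ^ ((p.1 - 1 + 1)*(p.2 - 1 + 1)) / (((p.2 - 1 : ℕ):ℝ)+1)) = _
      rw [hc]
      simp only []
      rw [e1, e2, e3, hab]
      field_simp
      rw [hn']
      ring_nf
      field_simp
    rw [Finset.sum_congr rfl hterm, ← Finset.sum_mul,
      Nat.sum_divisorsAntidiagonal (f := fun a _ => (a:ℝ) * ((Nfun a q : ℚ):ℝ))]
    have hnecklace := necklace_sum q n hn
    have hcast : ∑ a ∈ n.divisors, (a:ℝ) * ((Nfun a q : ℚ):ℝ) = (q:ℝ)^n - 1 := by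
      have := congrArg (fun t : ℚ => (t : ℝ)) hnecklace
      push_cast at this
      convert this using 2
    rw [hcast]
  -- identify the value
  have hlogq := Real.hasSum_pow_div_log_of_abs_lt_one hqx
  have hlogx := Real.hasSum_pow_div_log_of_abs_lt_one hx1
  have hdiff := hlogq.sub hlogx
  have hdiff' : HasSum (fun n : ℕ => ((q:ℝ)^(n+1) - 1) * (x^(n+1) / ((n+1:ℕ):ℝ)))
      (Real.log (1-x) - Real.log (1-(q:ℝ)*x)) := by
    have he : (fun n : ℕ => ((q:ℝ)^(n+1) - 1) * (x^(n+1) / ((n+1:ℕ):ℝ)))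
        = fun n : ℕ => ((q:ℝ)*x)^(n+1)/((n:ℝ)+1) - x^(n+1)/((n:ℝ)+1) := by
      funext n; push_cast; rw [mul_pow]; ring
    rw [he]
    have : -Real.log (1-(q:ℝ)*x) - -Real.log (1-x)
        = Real.log (1-x) - Real.log (1-(q:ℝ)*x) := by ring
    rw [← this]
    exact hdiff
  have hF : HasSum (fun n : ℕ => ((q:ℝ)^n - 1) * (x^n / (n:ℝ)))
      (Real.log (1-x) - Real.log (1-(q:ℝ)*x)) := by
    have h := (hasSum_nat_add_iff (f := fun n : ℕ => ((q:ℝ)^n - 1) * (x^n / (n:ℝ))) 1).mp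
      (by exact_mod_cast hdiff')
    simpa using h
  have hSval : (∑' p, g p) = Real.log (1-x) - Real.log (1-(q:ℝ)*x) := by
    have h1 : HasSum (fun n : ℕ => ((q:ℝ)^n - 1) * (x^n / (n:ℝ))) (∑' p, g p) := by
      rw [show (fun n : ℕ => ((q:ℝ)^n - 1) * (x^n / (n:ℝ)))
        = (fun n : ℕ => ∑' b : ((fun p : ℕ × ℕ => (p.1+1)*(p.2+1)) ⁻¹' {n}), g b) from
        (funext hfibval).symm]
      exact hfib
    exact h1.unique hF
  have hkey : HasSum (fun d : ℕ => c d * Real.log (1 - x^(d+1)))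
      (Real.log (1-(q:ℝ)*x) - Real.log (1-x)) := by
    have h := hsumd.neg
    simp only [mul_neg, neg_neg] at h
    rwa [hSval, neg_sub] at h
  have hprod := hkey.rexp
  have hmain : HasProd (fun d : ℕ => (1 - x ^ (d+1)) ^ (c d)) ((1 - (q:ℝ)*x)/(1-x)) := by
    have heq : (fun d : ℕ => Real.exp (c d * Real.log (1 - x^(d+1))))
        = fun d : ℕ => (1 - x ^ (d+1)) ^ (c d) := by
      funext d; rw [Real.rpow_def_of_pos (hpos d), mul_comm]
    have hval : Real.exp (Real.log (1-(q:ℝ)*x) - Real.log (1-x)) = (1-(q:ℝ)*x)/(1-x) := by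
      rw [Real.exp_sub, Real.exp_log h1qx, Real.exp_log h1x]
    rw [← heq, ← hval]
    exact hprod
  exact ⟨hmain.multipliable, hmain.tprod_eq⟩
end

section
/- Let q ≥ 2 be an integer and let x be a real number with |x| < 1/q. Then the family d ↦ ((1 − x^d)/(1 + x^d))^{Ñ(d,q)} over odd d ≥ 1 is multipliable (real-power exponentiation with positive base), and Π_{d odd} ((1 − x^d)/(1 + x^d))^{Ñ(d,q)} = ((1 − x)(1 − qx))/((1 + x)(1 + qx)). -/
/-- `Ñ(d,q) = (1/d) Σ_{a ∣ d} μ(a) (q^{d/a} + 1)` for odd `d`, and `0` for even `d`. -/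
noncomputable def Ntilde (d q : ℕ) : ℚ :=
  if Odd d then
    (1 / (d : ℚ)) *
      ∑ a ∈ d.divisors, ((ArithmeticFunction.moebius a : ℤ) : ℚ) * ((q : ℚ) ^ (d / a) + 1)
  else 0

/-- Power series of `log((1-y)/(1+y))` over odd exponents. -/
lemma hasSum_odd_log {y : ℝ} (h : |y| < 1) :
    HasSum (fun n : ℕ => if Odd n then -2 * y ^ n / (n : ℝ) else 0)
      (Real.log (1 - y) - Real.log (1 + y)) := by
  have h0 := (Real.hasSum_log_sub_log_of_abs_lt_one h).neg
  rw [neg_sub] at h0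
  have hinj : Function.Injective (fun j : ℕ => 2 * j + 1) := fun a b hab => by
    dsimp at hab; omega
  refine (Function.Injective.hasSum_iff hinj ?_).mp ?_
  · intro n hn
    rw [if_neg]
    rintro ⟨j, hj⟩
    exact hn ⟨j, by dsimp; omega⟩
  · convert h0 using 1; rfl
    funext j
    simp only [Function.comp_apply]
    rw [if_pos ⟨j, by ring⟩]
    push_cast
    ring

/-- Möbius inversion: `∑_{d ∣ n} d·Ñ(d,q) = q^n + 1` for odd `n`. -/
lemma sum_divisors_mul_Ntilde (q : ℕ) {n : ℕ} (hn : Odd n) :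
    ∑ d ∈ n.divisors, (d : ℚ) * Ntilde d q = (q : ℚ) ^ n + 1 := by
  have hn0 : 0 < n := Nat.pos_of_ne_zero (by rintro rfl; simp [Nat.odd_iff] at hn)
  have key := (ArithmeticFunction.sum_eq_iff_sum_smul_moebius_eq
    (R := ℚ)
    (f := fun d => ∑ p ∈ d.divisorsAntidiagonal,
      (ArithmeticFunction.moebius p.1 : ℤ) • ((q : ℚ) ^ p.2 + 1))
    (g := fun m => (q : ℚ) ^ m + 1)).mpr (fun m _ => rfl) n hn0
  rw [← key]
  refine Finset.sum_congr rfl fun d hd => ?_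
  obtain ⟨hdvd, -⟩ := Nat.mem_divisors.mp hd
  have hd0 : 0 < d := Nat.pos_of_mem_divisors hd
  have hdodd : Odd d := by
    rcases hdvd with ⟨c, rfl⟩
    exact (Nat.odd_mul.mp hn).1
  rw [Ntilde, if_pos hdodd,
    Nat.sum_divisorsAntidiagonal (f := fun a b =>
      (ArithmeticFunction.moebius a : ℤ) • ((q : ℚ) ^ b + 1))]
  have hdQ : (d : ℚ) ≠ 0 := Nat.cast_ne_zero.mpr hd0.ne'
  rw [← mul_assoc, mul_one_div, div_self hdQ, one_mul]
  refine Finset.sum_congr rfl fun a _ => ?_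
  rw [zsmul_eq_mul]

/-- Bound `|Ñ(d,q)| ≤ 2 q^d`. -/
lemma abs_Ntilde_le (q : ℕ) (hq : 1 ≤ q) (d : ℕ) :
    |Ntilde d q| ≤ 2 * (q : ℚ) ^ d := by
  have hq1 : (1 : ℚ) ≤ (q : ℚ) := by exact_mod_cast hq
  have hqd : (1 : ℚ) ≤ (q : ℚ) ^ d := one_le_pow₀ hq1
  by_cases hd : Odd d
  · have hd0 : 0 < d := Nat.pos_of_ne_zero (by rintro rfl; simp [Nat.odd_iff] at hd)
    rw [Ntilde, if_pos hd, abs_mul]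
    have hcard : (d.divisors.card : ℚ) ≤ (d : ℚ) := by
      have : d.divisors ⊆ Finset.Icc 1 d := by
        intro a ha
        rw [Finset.mem_Icc]
        exact ⟨Nat.pos_of_mem_divisors ha, Nat.le_of_dvd hd0 (Nat.mem_divisors.mp ha).1⟩
      have := Finset.card_le_card this
      rw [Nat.card_Icc] at this
      exact_mod_cast this.trans (by omega)
    have habs : |∑ a ∈ d.divisors,
        ((ArithmeticFunction.moebius a : ℤ) : ℚ) * ((q : ℚ) ^ (d / a) + 1)|
        ≤ (d.divisors.card : ℚ) * ((q : ℚ) ^ d + 1) := by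
      calc |∑ a ∈ d.divisors, ((ArithmeticFunction.moebius a : ℤ) : ℚ) * ((q : ℚ) ^ (d / a) + 1)|
          ≤ ∑ a ∈ d.divisors, |((ArithmeticFunction.moebius a : ℤ) : ℚ) * ((q : ℚ) ^ (d / a) + 1)| :=
            Finset.abs_sum_le_sum_abs _ _
        _ ≤ ∑ a ∈ d.divisors, ((q : ℚ) ^ d + 1) := by
            refine Finset.sum_le_sum fun a _ => ?_
            rw [abs_mul]
            have h1 : |((ArithmeticFunction.moebius a : ℤ) : ℚ)| ≤ 1 := by
              have := ArithmeticFunction.abs_moebius_le_one (n := a)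
              calc |((ArithmeticFunction.moebius a : ℤ) : ℚ)|
                  = ((|ArithmeticFunction.moebius a| : ℤ) : ℚ) := by push_cast; rfl
                _ ≤ 1 := by exact_mod_cast this
            have h2 : |((q : ℚ) ^ (d / a) + 1)| ≤ (q : ℚ) ^ d + 1 := by
              rw [abs_of_nonneg (by positivity)]
              have : (q : ℚ) ^ (d / a) ≤ (q : ℚ) ^ d :=
                pow_le_pow_right₀ hq1 (Nat.div_le_self d a)
              linarith
            calc |((ArithmeticFunction.moebius a : ℤ) : ℚ)| * |(q : ℚ) ^ (d / a) + 1|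
                ≤ 1 * ((q : ℚ) ^ d + 1) := by
                  apply mul_le_mul h1 h2 (abs_nonneg _) (by norm_num)
              _ = (q : ℚ) ^ d + 1 := one_mul _
        _ = (d.divisors.card : ℚ) * ((q : ℚ) ^ d + 1) := by
            rw [Finset.sum_const, nsmul_eq_mul]
    have hdQ : (0 : ℚ) < (d : ℚ) := by exact_mod_cast hd0
    calc |1 / (d : ℚ)| * |∑ a ∈ d.divisors,
          ((ArithmeticFunction.moebius a : ℤ) : ℚ) * ((q : ℚ) ^ (d / a) + 1)|
        ≤ (1 / (d : ℚ)) * ((d : ℚ) * ((q : ℚ) ^ d + 1)) := by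
          rw [abs_of_nonneg (by positivity)]
          refine mul_le_mul_of_nonneg_left (habs.trans ?_) (by positivity)
          exact mul_le_mul_of_nonneg_right hcard (by positivity)
      _ = (q : ℚ) ^ d + 1 := by field_simp
      _ ≤ 2 * (q : ℚ) ^ d := by linarith
  · rw [Ntilde, if_neg hd]
    simp only [abs_zero]
    positivity

/-- The exponent `Ñ(d,q)` as a real number. -/
noncomputable def NtR (q d : ℕ) : ℝ := ((Ntilde d q : ℚ) : ℝ)

/-- The summand of the rearranged double series. -/
noncomputable def Tfn (q : ℕ) (x : ℝ) (p : ℕ × ℕ) : ℝ :=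
  if Odd p.2 then NtR q p.1 * (-2 * x ^ (p.1 * p.2) / (p.2 : ℝ)) else 0

lemma NtR_zero (q : ℕ) : NtR q 0 = 0 := by
  simp [NtR, Ntilde, Nat.odd_iff]

lemma NtR_even (q : ℕ) {d : ℕ} (h : ¬ Odd d) : NtR q d = 0 := by
  simp [NtR, Ntilde, h]

lemma abs_NtR_le (q : ℕ) (hq : 1 ≤ q) (d : ℕ) : |NtR q d| ≤ 2 * (q : ℝ) ^ d := by
  have := abs_Ntilde_le q hq d
  rw [NtR]
  calc |((Ntilde d q : ℚ) : ℝ)| = ((|Ntilde d q| : ℚ) : ℝ) := by push_cast; rfl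
    _ ≤ ((2 * (q : ℚ) ^ d : ℚ) : ℝ) := by exact_mod_cast this
    _ = 2 * (q : ℝ) ^ d := by push_cast; rfl

lemma summable_Tfn (q : ℕ) (hq : 1 ≤ q) {x : ℝ} (hx1 : |x| < 1)
    (hqx : (q : ℝ) * |x| < 1) : Summable (Tfn q x) := by
  have hb1 : Summable (fun d : ℕ => ‖(4 : ℝ) * ((q : ℝ) * |x|) ^ d‖) := by
    have := (summable_geometric_of_lt_one (by positivity) hqx).mul_left (4 : ℝ)
    exact this.abs
  have hb2 : Summable (fun k : ℕ => ‖|x| ^ (k - 1)‖) := by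
    refine Summable.abs ?_
    rw [← summable_nat_add_iff 1]
    simpa using summable_geometric_of_lt_one (abs_nonneg x) hx1
  have hb := summable_mul_of_summable_norm (R := ℝ) hb1 hb2
  refine Summable.of_norm_bounded hb ?_
  rintro ⟨d, k⟩
  by_cases hk : Odd k
  · by_cases hd : d = 0
    · subst hd
      simp only [Tfn, if_pos hk, NtR_zero, zero_mul, norm_zero]
      positivity
    · have hd1 : 1 ≤ d := Nat.one_le_iff_ne_zero.mpr hd
      have hk1 : 1 ≤ k := Nat.one_le_iff_ne_zero.mpr (by rintro rfl; simp [Nat.odd_iff] at hk)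
      have hke : (1 : ℝ) ≤ (k : ℝ) := by exact_mod_cast hk1
      have habsT : ‖Tfn q x (d, k)‖ = |NtR q d| * (2 * |x| ^ (d * k) / (k : ℝ)) := by
        simp only [Tfn, if_pos hk, Real.norm_eq_abs, abs_mul, abs_div, abs_neg, abs_two,
          abs_pow, Nat.abs_cast]
      rw [habsT]
      have hdk : d + (k - 1) ≤ d * k := by
        obtain ⟨k', rfl⟩ : ∃ k', k = k' + 1 := ⟨k - 1, by omega⟩
        have h1 : k' ≤ d * k' := Nat.le_mul_of_pos_left k' (by omega)
        have h2 : d * (k' + 1) = d * k' + d := Nat.mul_succ d k'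
        omega
      have hxpow : |x| ^ (d * k) ≤ |x| ^ d * |x| ^ (k - 1) := by
        rw [← pow_add]
        exact pow_le_pow_of_le_one (abs_nonneg x) hx1.le hdk
      calc |NtR q d| * (2 * |x| ^ (d * k) / (k : ℝ))
          ≤ (2 * (q : ℝ) ^ d) * (2 * (|x| ^ d * |x| ^ (k - 1))) := by
            refine mul_le_mul (abs_NtR_le q hq d) ?_ (by positivity) (by positivity)
            calc 2 * |x| ^ (d * k) / (k : ℝ) ≤ 2 * |x| ^ (d * k) / 1 := by
                  apply div_le_div_of_nonneg_left (by positivity) one_pos hke |>.trans_eq rfl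
              _ = 2 * |x| ^ (d * k) := div_one _
              _ ≤ 2 * (|x| ^ d * |x| ^ (k - 1)) := by linarith
        _ = (4 : ℝ) * ((q : ℝ) * |x|) ^ d * |x| ^ (k - 1) := by
            rw [mul_pow]; ring
  · simp only [Tfn, if_neg hk, norm_zero]
    positivity

open Set in
lemma tsum_fiber_Tfn (q : ℕ) (x : ℝ) (n : ℕ) :
    ∑' (p : (fun p : ℕ × ℕ => p.1 * p.2) ⁻¹' {n}), Tfn q x p
      = if Odd n then -2 * x ^ n * ((q : ℝ) ^ n + 1) / n else 0 := by
  rcases eq_or_ne n 0 with rfl | hn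
  · rw [if_neg (by simp [Nat.odd_iff])]
    have hz : ∀ p : (fun p : ℕ × ℕ => p.1 * p.2) ⁻¹' {(0 : ℕ)}, Tfn q x p = 0 := by
      rintro ⟨⟨d, k⟩, hp⟩
      simp only [mem_preimage, mem_singleton_iff, Nat.mul_eq_zero] at hp
      rcases hp with rfl | rfl
      · simp [Tfn, NtR_zero]
      · simp [Tfn, Nat.odd_iff]
    simp only [hz, tsum_zero]
  · rw [show (fun p : ℕ × ℕ => p.1 * p.2) ⁻¹' {n} = ↑n.divisorsAntidiagonal by
        ext p; simp [Nat.mem_divisorsAntidiagonal, hn],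
      Finset.tsum_subtype' n.divisorsAntidiagonal (Tfn q x)]
    by_cases hodd : Odd n
    · rw [if_pos hodd]
      have hterm : ∀ p ∈ n.divisorsAntidiagonal,
          Tfn q x p = (-2 * x ^ n / n) * ((p.1 : ℝ) * NtR q p.1) := by
        rintro ⟨d, k⟩ hp
        obtain ⟨hdk, -⟩ := Nat.mem_divisorsAntidiagonal.mp hp
        have hkodd : Odd k := by
          rw [← hdk] at hodd
          exact (Nat.odd_mul.mp hodd).2
        have hk0 : ((k : ℕ) : ℝ) ≠ 0 := by
          have : k ≠ 0 := by rintro rfl; simp [Nat.odd_iff] at hkodd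
          exact_mod_cast this
        have hd0 : ((d : ℕ) : ℝ) ≠ 0 := by
          have : d ≠ 0 := by rintro rfl; simp at hdk; omega
          exact_mod_cast this
        simp only [Tfn, if_pos hkodd]
        rw [← hdk]
        push_cast
        field_simp
      rw [Finset.sum_congr rfl hterm, ← Finset.mul_sum,
        Nat.sum_divisorsAntidiagonal (f := fun a _ => (a : ℝ) * NtR q a)]
      have hBR : ∑ d ∈ n.divisors, (d : ℝ) * NtR q d = (q : ℝ) ^ n + 1 := by
        have hQ := sum_divisors_mul_Ntilde q hodd
        calc ∑ d ∈ n.divisors, (d : ℝ) * NtR q d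
            = ((∑ d ∈ n.divisors, (d : ℚ) * Ntilde d q : ℚ) : ℝ) := by
              rw [Rat.cast_sum]
              exact Finset.sum_congr rfl fun d _ => by rw [NtR]; push_cast; ring
          _ = (((q : ℚ) ^ n + 1 : ℚ) : ℝ) := by rw [hQ]
          _ = (q : ℝ) ^ n + 1 := by push_cast; ring
      rw [hBR]
      ring
    · rw [if_neg hodd]
      refine Finset.sum_eq_zero fun p hp => ?_
      obtain ⟨hdk, -⟩ := Nat.mem_divisorsAntidiagonal.mp hp
      by_cases hk : Odd p.2
      · have hd : ¬ Odd p.1 := by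
          intro hd1
          exact hodd (hdk ▸ Nat.odd_mul.mpr ⟨hd1, hk⟩)
        simp [Tfn, hk, NtR_even q hd]
      · simp [Tfn, hk]

/-- Lemma 2.3(c): for an integer `q ≥ 2` and a real `x` with `|x| < 1/q`, the family
`d ↦ ((1 - x^d)/(1 + x^d))^{Ñ(d,q)}` over odd `d ≥ 1` (here over all `d ≥ 1`, since
`Ñ(d,q) = 0` for even `d`) is multipliable, and
`∏_{d odd} ((1 - x^d)/(1 + x^d))^{Ñ(d,q)} = ((1 - x)(1 - qx))/((1 + x)(1 + qx))`. -/
theorem statement8 (q : ℕ) (hq : 2 ≤ q) (x : ℝ) (hx : |x| < 1 / q) :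
    Multipliable
      (fun d : ℕ => ((1 - x ^ (d + 1)) / (1 + x ^ (d + 1))) ^ ((Ntilde (d + 1) q : ℚ) : ℝ)) ∧
    ∏' d : ℕ, ((1 - x ^ (d + 1)) / (1 + x ^ (d + 1))) ^ ((Ntilde (d + 1) q : ℚ) : ℝ) =
      ((1 - x) * (1 - q * x)) / ((1 + x) * (1 + q * x)) := by
  have hq1 : 1 ≤ q := le_trans (by norm_num) hq
  have hqR : (1 : ℝ) ≤ (q : ℝ) := by exact_mod_cast hq1
  have hq0 : (0 : ℝ) < (q : ℝ) := by linarith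
  have hx1 : |x| < 1 := lt_of_lt_of_le hx (by rw [div_le_one hq0]; exact hqR)
  have hqx : (q : ℝ) * |x| < 1 := by
    rw [lt_div_iff₀ hq0] at hx
    linarith [hx]
  have hqxabs : |(q : ℝ) * x| < 1 := by
    rw [abs_mul, Nat.abs_cast]
    exact hqx
  obtain ⟨hxl, hxr⟩ := abs_lt.mp hx1
  obtain ⟨hqxl, hqxr⟩ := abs_lt.mp hqxabs
  have h1x : (0 : ℝ) < 1 - x := by linarith
  have h2x : (0 : ℝ) < 1 + x := by linarith
  have h1qx : (0 : ℝ) < 1 - (q : ℝ) * x := by linarith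
  have h2qx : (0 : ℝ) < 1 + (q : ℝ) * x := by linarith
  set S : ℝ := (Real.log (1 - x) - Real.log (1 + x)) +
      (Real.log (1 - (q : ℝ) * x) - Real.log (1 + (q : ℝ) * x)) with hS
  -- sum of the odd-exponent logarithmic series
  have hu : HasSum (fun n : ℕ => if Odd n then -2 * x ^ n * ((q : ℝ) ^ n + 1) / n else 0) S := by
    have h12 := (hasSum_odd_log hx1).add (hasSum_odd_log hqxabs)
    have hfeq : (fun n : ℕ => if Odd n then -2 * x ^ n * ((q : ℝ) ^ n + 1) / n else 0)
        = fun n : ℕ => (if Odd n then -2 * x ^ n / (n : ℝ) else 0) +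
          (if Odd n then -2 * ((q : ℝ) * x) ^ n / (n : ℝ) else 0) := by
      funext n
      by_cases hodd : Odd n
      · simp only [if_pos hodd]
        rw [mul_pow]
        ring
      · simp [hodd]
    rw [hfeq]
    exact h12
  -- the double series sums to `S`
  have hsum := summable_Tfn q hq1 hx1 hqx
  have hT : HasSum (Tfn q x) S := by
    have hA := hsum.hasSum
    have hfib := hA.tsum_fiberwise (fun p : ℕ × ℕ => p.1 * p.2)
    rw [show (fun n : ℕ => ∑' (p : (fun p : ℕ × ℕ => p.1 * p.2) ⁻¹' {n}), Tfn q x p)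
        = (fun n : ℕ => if Odd n then -2 * x ^ n * ((q : ℝ) ^ n + 1) / n else 0)
      from funext (tsum_fiber_Tfn q x)] at hfib
    rw [← hu.unique hfib] at hA
    exact hA
  -- inner sums
  have hinner : ∀ d : ℕ, HasSum (fun k => Tfn q x (d, k))
      (NtR q d * Real.log ((1 - x ^ d) / (1 + x ^ d))) := by
    intro d
    rcases eq_or_ne d 0 with rfl | hd
    · rw [NtR_zero, zero_mul]
      convert hasSum_zero with k
      simp [Tfn, NtR_zero]
    · have hxd : |x ^ d| < 1 := by
        rw [abs_pow]
        exact pow_lt_one₀ (abs_nonneg x) hx1 hd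
      obtain ⟨hl, hr⟩ := abs_lt.mp hxd
      have hp1 : (0 : ℝ) < 1 - x ^ d := by linarith
      have hp2 : (0 : ℝ) < 1 + x ^ d := by linarith
      have h := (hasSum_odd_log hxd).mul_left (NtR q d)
      rw [Real.log_div hp1.ne' hp2.ne']
      convert h using 1; rfl
      funext k
      by_cases hk : Odd k
      · simp only [Tfn, if_pos hk, mul_ite, mul_zero, pow_mul]
      · simp [Tfn, hk]
  have hgsum : HasSum (fun d : ℕ => NtR q d * Real.log ((1 - x ^ d) / (1 + x ^ d))) S :=
    hT.prod_fiberwise hinner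
  have hg1 : HasSum (fun d : ℕ =>
      NtR q (d + 1) * Real.log ((1 - x ^ (d + 1)) / (1 + x ^ (d + 1)))) S := by
    have := (hasSum_nat_add_iff
      (f := fun d : ℕ => NtR q d * Real.log ((1 - x ^ d) / (1 + x ^ d))) 1).mpr
      (by simpa [NtR_zero] using hgsum)
    exact this
  have hprod := hg1.rexp
  have hfe : (Real.exp ∘ fun d : ℕ =>
      NtR q (d + 1) * Real.log ((1 - x ^ (d + 1)) / (1 + x ^ (d + 1))))
      = fun d : ℕ => ((1 - x ^ (d + 1)) / (1 + x ^ (d + 1))) ^ (NtR q (d + 1)) := by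
    funext d
    have hxd : |x ^ (d + 1)| < 1 := by
      rw [abs_pow]
      exact pow_lt_one₀ (abs_nonneg x) hx1 (Nat.succ_ne_zero d)
    obtain ⟨hl, hr⟩ := abs_lt.mp hxd
    have hp1 : (0 : ℝ) < 1 - x ^ (d + 1) := by linarith
    have hp2 : (0 : ℝ) < 1 + x ^ (d + 1) := by linarith
    rw [Function.comp_apply, Real.rpow_def_of_pos (div_pos hp1 hp2), mul_comm]
  rw [hfe] at hprod
  have hA : (0 : ℝ) < (1 - x) / (1 + x) := div_pos h1x h2x
  have hB : (0 : ℝ) < (1 - (q : ℝ) * x) / (1 + (q : ℝ) * x) := div_pos h1qx h2qx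
  have hSval : Real.exp S = ((1 - x) * (1 - (q : ℝ) * x)) / ((1 + x) * (1 + (q : ℝ) * x)) := by
    have hlog : S = Real.log (((1 - x) / (1 + x)) * ((1 - (q : ℝ) * x) / (1 + (q : ℝ) * x))) := by
      rw [Real.log_mul hA.ne' hB.ne', Real.log_div h1x.ne' h2x.ne',
        Real.log_div h1qx.ne' h2qx.ne']
    rw [hlog, Real.exp_log (mul_pos hA hB), div_mul_div_comm]
  constructor
  · exact hprod.multipliable
  · exact hprod.tprod_eq.trans hSval
end

section
/- For every integer n ≥ 1 and every real number q > 1, Σ_{λ ⊢ n} 1/C_{U,λ}(q) = 1/(q^n·(1 + q^{−1})·(1 − q^{−2})···(1 − (−1)^n q^{−n})), i.e. the sum over all partitions λ of n of 1/C_{U,λ}(q) equals 1/(q^n·Π_{k=1}^{n}(1 − (−1)^k q^{−k})). -/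
/-- `k(λ) = 2 Σ_{i<j} i m_i m_j + Σ_i (i-1) m_i²`, where `m_i` is the number of parts of `λ`
of size `i`. -/
def kPart {n : ℕ} (lam : n.Partition) : ℕ :=
  2 * ∑ i ∈ Finset.range (n + 1), ∑ j ∈ Finset.range (n + 1),
      (if i < j then i * lam.parts.count i * lam.parts.count j else 0)
    + ∑ i ∈ Finset.range (n + 1), (i - 1) * lam.parts.count i ^ 2

/-- `C_{U,λ}(q) = q^{k(λ)} ∏_i |U(m_i, q)|`, where
`|U(m,q)| = q^{m(m-1)/2} (q^m - (-1)^m) ⋯ (q + 1)`, evaluated at a real number `q`. -/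
def CU {n : ℕ} (lam : n.Partition) (q : ℝ) : ℝ :=
  q ^ kPart lam *
    ∏ i ∈ Finset.range (n + 1),
      (q ^ (lam.parts.count i * (lam.parts.count i - 1) / 2) *
        ∏ k ∈ Finset.Icc 1 (lam.parts.count i), (q ^ k - (-1 : ℝ) ^ k))

open Finset
noncomputable def phiS (t : ℝ) (m : ℕ) : ℝ := ∏ k ∈ Finset.Icc 1 m, (1 - t ^ k)
lemma phiS_zero (t : ℝ) : phiS t 0 = 1 := by simp [phiS]
lemma phiS_succ (t : ℝ) (m : ℕ) : phiS t (m+1) = phiS t m * (1 - t ^ (m+1)) := by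
  rw [phiS, phiS, ← Finset.prod_Icc_succ_top (Nat.le_add_left 1 m)]
lemma phiS_pos {t : ℝ} (ht : |t| < 1) (m : ℕ) : 0 < phiS t m := by
  apply Finset.prod_pos
  intro k hk
  have hk1 : 1 ≤ k := (Finset.mem_Icc.mp hk).1
  have : |t ^ k| < 1 := by
    rw [abs_pow]; exact pow_lt_one₀ (abs_nonneg t) ht (by omega)
  have := abs_lt.mp this
  linarith [this.1, this.2]

noncomputable def gbS (t : ℝ) (m : ℕ) (r : ℤ) : ℝ :=
  if 0 ≤ r ∧ r ≤ (m : ℤ) then phiS t m / (phiS t r.toNat * phiS t (m - r.toNat)) else 0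

noncomputable def ginfS (t : ℝ) (r : ℤ) : ℝ := if 0 ≤ r then 1 / phiS t r.toNat else 0

section gb
variable {t : ℝ} (ht : |t| < 1) (ht0 : t ≠ 0)
include ht

omit ht0 in
lemma phiS_ne (m : ℕ) : phiS t m ≠ 0 := (phiS_pos ht m).ne'

omit ht ht0 in
lemma gbS_neg {r : ℤ} (hr : r < 0) (m : ℕ) : gbS t m r = 0 := by
  rw [gbS, if_neg]; omega

omit ht ht0 in
lemma gbS_gt {m : ℕ} {r : ℤ} (hr : (m : ℤ) < r) : gbS t m r = 0 := by
  rw [gbS, if_neg]; omega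

omit ht0 in
lemma gbS_zero (m : ℕ) : gbS t m 0 = 1 := by
  rw [gbS, if_pos (by omega)]
  simp [phiS_zero, div_self (phiS_ne ht m)]

omit ht ht0 in
lemma gbS_nat {m k : ℕ} (hk : k ≤ m) : gbS t m (k : ℤ) = phiS t m / (phiS t k * phiS t (m - k)) := by
  rw [gbS, if_pos (by omega)]
  simp

omit ht0 in
lemma gbS_pascal (m : ℕ) (r : ℤ) :
    gbS t (m + 1) r = t ^ r * gbS t m r + gbS t m (r - 1) := by
  rcases lt_trichotomy r 0 with hr | hr | hr
  · rw [gbS_neg hr, gbS_neg hr, gbS_neg (by omega), mul_zero, add_zero]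
  · subst hr
    rw [gbS_zero ht, gbS_zero ht, gbS_neg (by omega)]
    simp
  · obtain ⟨k, rfl⟩ : ∃ k : ℕ, r = ((k + 1 : ℕ) : ℤ) := ⟨(r - 1).toNat, by omega⟩
    have hz : t ^ ((k + 1 : ℕ) : ℤ) = t ^ (k + 1) := zpow_natCast t (k+1)
    have e2 : ((k + 1 : ℕ) : ℤ) - 1 = ((k : ℕ) : ℤ) := by push_cast; ring
    rw [hz, e2]
    rcases Nat.lt_or_ge m (k + 1) with hgt | hle
    · -- r = k+1 > m, so r > m+1 or r = m+1
      rcases Nat.lt_or_ge m k with hgt2 | hk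
      · rw [gbS_gt (by push_cast; omega), gbS_gt (by push_cast; omega),
          gbS_gt (by push_cast; omega)]
        simp
      · -- k = m, r = m+1
        have : k = m := by omega
        subst this
        rw [gbS_gt (m := k) (r := ((k+1:ℕ):ℤ)) (by push_cast; omega), mul_zero, zero_add,
          gbS_nat (le_refl k), gbS_nat (le_refl (k+1))]
        simp [Nat.sub_self, phiS_zero, div_self (phiS_ne ht k), div_self (phiS_ne ht (k+1))]
    · -- k + 1 ≤ m : main case. write m = k + (j+1).
      obtain ⟨j, rfl⟩ : ∃ j : ℕ, m = k + (j + 1) := ⟨m - k - 1, by omega⟩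
      rw [gbS_nat (show k+1 ≤ k+(j+1)+1 by omega), gbS_nat (show k+1 ≤ k+(j+1) by omega),
        gbS_nat (show k ≤ k+(j+1) by omega)]
      rw [show k+(j+1)+1 - (k+1) = j+1 from by omega, show k+(j+1) - (k+1) = j from by omega,
        show k+(j+1) - k = j+1 from by omega]
      rw [phiS_succ t (k+(j+1)), phiS_succ t k, phiS_succ t j]
      have h1 := phiS_ne ht k
      have h2 := phiS_ne ht j
      have h3 := phiS_ne ht (k+(j+1))
      have h4 : (1:ℝ) - t^(k+1) ≠ 0 := by
        have := phiS_succ t k; have := phiS_ne ht (k+1)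
        intro h0; rw [phiS_succ t k, h0, mul_zero] at this; exact this rfl
      have h5 : (1:ℝ) - t^(j+1) ≠ 0 := by
        have := phiS_ne ht (j+1)
        intro h0; rw [phiS_succ t j, h0, mul_zero] at this; exact this rfl
      field_simp
      ring

omit ht ht0 in
lemma ginfS_neg {r : ℤ} (hr : r < 0) : ginfS t r = 0 := if_neg (by omega)

omit ht0 in
lemma ginfS_zero : ginfS t 0 = 1 := by simp [ginfS, phiS_zero]

omit ht ht0 in
lemma ginfS_nat (k : ℕ) : ginfS t (k:ℤ) = 1 / phiS t k := by simp [ginfS]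

omit ht0 in
lemma ginfS_pascal (r : ℤ) : ginfS t r = t ^ r * ginfS t r + ginfS t (r - 1) := by
  rcases lt_trichotomy r 0 with hr | hr | hr
  · rw [ginfS_neg hr, ginfS_neg (by omega), mul_zero, add_zero]
  · subst hr
    rw [ginfS_zero ht, ginfS_neg (by omega)]
    simp
  · obtain ⟨k, rfl⟩ : ∃ k : ℕ, r = ((k + 1 : ℕ) : ℤ) := ⟨(r - 1).toNat, by omega⟩
    rw [show ((k + 1:ℕ):ℤ) - 1 = ((k:ℕ):ℤ) by push_cast; ring, ginfS_nat, ginfS_nat,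
      show t ^ ((k + 1 : ℕ) : ℤ) = t ^ (k + 1) from zpow_natCast t (k+1), phiS_succ t k]
    have h1 := phiS_ne ht k
    have h4 : (1:ℝ) - t^(k+1) ≠ 0 := by
      have := phiS_ne ht (k+1)
      intro h0; rw [phiS_succ t k, h0, mul_zero] at this; exact this rfl
    field_simp
    ring

include ht ht0 in
lemma vfin (m p : ℕ) : ∀ r : ℕ,
    ∑ k ∈ range (r+1), t ^ ((k : ℤ) * (p + k - r)) * (gbS t m k * gbS t p ((r : ℤ) - k))
      = gbS t (m + p) r := by
  induction p with
  | zero =>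
    intro r
    rw [Finset.sum_eq_single r]
    · rw [show ((r:ℤ) - r) = 0 by ring, gbS_zero ht,
        show ((r:ℤ) * ((0:ℕ) + r - r)) = 0 by push_cast; ring]
      simp
    · intro k hk hne
      have hk' : k < r := by simp at hk; omega
      rw [gbS_gt (m := 0) (by push_cast; omega), mul_zero, mul_zero]
    · intro h; simp at h
  | succ p ih =>
    intro r
    rcases r with _ | r'
    · simp [gbS_zero ht]
    · have hstep : ∀ k ∈ range (r'+1+1),
        t ^ ((k:ℤ) * (((p+1:ℕ):ℤ) + k - ((r'+1:ℕ):ℤ))) * (gbS t m k * gbS t (p+1) (((r'+1:ℕ):ℤ) - k))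
        = t ^ (((r'+1:ℕ):ℤ)) * (t ^ ((k:ℤ) * ((p:ℤ) + k - ((r'+1:ℕ):ℤ))) * (gbS t m k * gbS t p (((r'+1:ℕ):ℤ) - k)))
          + t ^ ((k:ℤ) * ((p:ℤ) + k - ((r':ℕ):ℤ))) * (gbS t m k * gbS t p (((r':ℕ):ℤ) - k)) := by
        intro k _
        rw [gbS_pascal ht p (((r'+1:ℕ):ℤ) - k),
          show ((r'+1:ℕ):ℤ) - k - 1 = ((r':ℕ):ℤ) - k by push_cast; ring]
        have e1 : t ^ ((k:ℤ) * (((p+1:ℕ):ℤ) + k - ((r'+1:ℕ):ℤ))) * t ^ (((r'+1:ℕ):ℤ) - k)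
            = t ^ (((r'+1:ℕ):ℤ)) * t ^ ((k:ℤ) * ((p:ℤ) + k - ((r'+1:ℕ):ℤ))) := by
          rw [← zpow_add₀ ht0, ← zpow_add₀ ht0]; congr 1; push_cast; ring
        have e2 : t ^ ((k:ℤ) * (((p+1:ℕ):ℤ) + k - ((r'+1:ℕ):ℤ)))
            = t ^ ((k:ℤ) * ((p:ℤ) + k - ((r':ℕ):ℤ))) := by
          congr 1; push_cast; ring
        linear_combination (gbS t m k * gbS t p (((r'+1:ℕ):ℤ) - k)) * e1
          + (gbS t m k * gbS t p (((r':ℕ):ℤ) - k)) * e2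
      have hp : ∀ k : ℕ, ((k:ℤ) * (((p+1:ℕ):ℤ) + k - ((r'+1:ℕ):ℤ)))
          = ((k:ℤ) * ((p+1 : ℤ) + k - ((r'+1:ℕ):ℤ))) := by intro k; push_cast; ring
      rw [Finset.sum_congr rfl hstep, Finset.sum_add_distrib, ← Finset.mul_sum, ih (r'+1),
        Finset.sum_range_succ (n := r'+1),
        gbS_neg (r := ((r':ℕ):ℤ) - ((r'+1:ℕ):ℤ)) (by push_cast; omega), mul_zero, mul_zero,
        add_zero, ih r', show m + (p+1) = (m+p) + 1 by omega, gbS_pascal ht (m+p) ((r'+1:ℕ):ℤ),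
        show ((r'+1:ℕ):ℤ) - 1 = ((r':ℕ):ℤ) by push_cast; ring]

include ht ht0 in
lemma vinf (p : ℕ) : ∀ r : ℕ,
    ∑ k ∈ range (r+1), t ^ ((k : ℤ) * (p + k - r)) * (ginfS t k * gbS t p ((r : ℤ) - k))
      = ginfS t r := by
  induction p with
  | zero =>
    intro r
    rw [Finset.sum_eq_single r]
    · rw [show ((r:ℤ) - r) = 0 by ring, gbS_zero ht,
        show ((r:ℤ) * ((0:ℕ) + r - r)) = 0 by push_cast; ring]
      simp
    · intro k hk hne
      have hk' : k < r := by simp at hk; omega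
      rw [gbS_gt (m := 0) (by push_cast; omega), mul_zero, mul_zero]
    · intro h; simp at h
  | succ p ih =>
    intro r
    rcases r with _ | r'
    · simp [gbS_zero ht, ginfS_zero ht]
    · have hstep : ∀ k ∈ range (r'+1+1),
        t ^ ((k:ℤ) * (((p+1:ℕ):ℤ) + k - ((r'+1:ℕ):ℤ))) * (ginfS t k * gbS t (p+1) (((r'+1:ℕ):ℤ) - k))
        = t ^ (((r'+1:ℕ):ℤ)) * (t ^ ((k:ℤ) * ((p:ℤ) + k - ((r'+1:ℕ):ℤ))) * (ginfS t k * gbS t p (((r'+1:ℕ):ℤ) - k)))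
          + t ^ ((k:ℤ) * ((p:ℤ) + k - ((r':ℕ):ℤ))) * (ginfS t k * gbS t p (((r':ℕ):ℤ) - k)) := by
        intro k _
        rw [gbS_pascal ht p (((r'+1:ℕ):ℤ) - k),
          show ((r'+1:ℕ):ℤ) - k - 1 = ((r':ℕ):ℤ) - k by push_cast; ring]
        have e1 : t ^ ((k:ℤ) * (((p+1:ℕ):ℤ) + k - ((r'+1:ℕ):ℤ))) * t ^ (((r'+1:ℕ):ℤ) - k)
            = t ^ (((r'+1:ℕ):ℤ)) * t ^ ((k:ℤ) * ((p:ℤ) + k - ((r'+1:ℕ):ℤ))) := by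
          rw [← zpow_add₀ ht0, ← zpow_add₀ ht0]; congr 1; push_cast; ring
        have e2 : t ^ ((k:ℤ) * (((p+1:ℕ):ℤ) + k - ((r'+1:ℕ):ℤ)))
            = t ^ ((k:ℤ) * ((p:ℤ) + k - ((r':ℕ):ℤ))) := by
          congr 1; push_cast; ring
        linear_combination (ginfS t k * gbS t p (((r'+1:ℕ):ℤ) - k)) * e1
          + (ginfS t k * gbS t p (((r':ℕ):ℤ) - k)) * e2
      rw [Finset.sum_congr rfl hstep, Finset.sum_add_distrib, ← Finset.mul_sum, ih (r'+1),
        Finset.sum_range_succ (n := r'+1),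
        gbS_neg (r := ((r':ℕ):ℤ) - ((r'+1:ℕ):ℤ)) (by push_cast; omega), mul_zero, mul_zero,
        add_zero, ih r', ← show ((r'+1:ℕ):ℤ) - 1 = ((r':ℕ):ℤ) by push_cast; ring,
        ← ginfS_pascal ht ((r'+1:ℕ):ℤ)]

end gb


lemma msum_map_pred (s : Multiset ℕ) : (s.map (· - 1)).sum + s.card = s.sum + (s.filter (· = 0)).card := by
  induction s using Multiset.induction_on with
  | empty => simp
  | cons a s ih =>
    rcases Nat.eq_zero_or_pos a with rfl | ha
    · simp only [Multiset.map_cons, Multiset.sum_cons, Multiset.card_cons, Multiset.filter_cons]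
      norm_num
      omega
    · simp only [Multiset.map_cons, Multiset.sum_cons, Multiset.card_cons, Multiset.filter_cons]
      have : ¬ (a = 0) := by omega
      simp [this]
      omega

lemma msum_filter_ne_zero (s : Multiset ℕ) : (s.filter (· ≠ 0)).sum = s.sum := by
  conv_rhs => rw [← Multiset.filter_add_not (· ≠ 0) s]
  rw [Multiset.sum_add]
  have : (s.filter (fun a => ¬ a ≠ 0)).sum = 0 := by
    apply Multiset.sum_eq_zero
    intro x hx
    have := Multiset.of_mem_filter hx
    simpa using this
  omega

lemma mcard_le_sum (s : Multiset ℕ) (h : ∀ x ∈ s, 1 ≤ x) : s.card ≤ s.sum := by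
  induction s using Multiset.induction_on with
  | empty => simp
  | cons a s ih =>
    simp only [Multiset.card_cons, Multiset.sum_cons]
    have h1 : 1 ≤ a := h a (Multiset.mem_cons_self a s)
    have h2 := ih (fun x hx => h x (Multiset.mem_cons_of_mem hx))
    omega

lemma msum_map_succ (s : Multiset ℕ) : (s.map (· + 1)).sum = s.sum + s.card := by
  induction s using Multiset.induction_on with
  | empty => simp
  | cons a s ih => simp [ih]; omega

/-- partition obtained by deleting the first column -/
def colDelB {n : ℕ} (b : ℕ) (lam : n.Partition) (h : lam.parts.card = b) : (n - b).Partition where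
  parts := (lam.parts.map (· - 1)).filter (· ≠ 0)
  parts_pos := fun hi => Nat.pos_of_ne_zero (Multiset.mem_filter.mp hi).2
  parts_sum := by
    rw [msum_filter_ne_zero]
    have h1 := msum_map_pred lam.parts
    have h2 : (lam.parts.filter (· = 0)).card = 0 := by
      rw [Multiset.card_eq_zero, Multiset.filter_eq_nil]
      intro a ha
      exact (lam.parts_pos ha).ne'
    rw [h2] at h1
    have h3 := lam.parts_sum
    have h4 := mcard_le_sum lam.parts (fun x hx => lam.parts_pos hx)
    omega

/-- partition obtained by adding a first column of height `b` -/
def colAddB {n : ℕ} (b : ℕ) (hb : b ≤ n) (rho : (n - b).Partition)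
    (hc : rho.parts.card ≤ b) : n.Partition where
  parts := rho.parts.map (· + 1) + Multiset.replicate (b - rho.parts.card) 1
  parts_pos := by
    intro i hi
    rcases Multiset.mem_add.mp hi with hi | hi
    · obtain ⟨j, _, rfl⟩ := Multiset.mem_map.mp hi
      omega
    · rw [Multiset.eq_of_mem_replicate hi]
      omega
  parts_sum := by
    rw [Multiset.sum_add, msum_map_succ, Multiset.sum_replicate, smul_eq_mul, mul_one,
      rho.parts_sum]
    omega

section structural
variable {n b : ℕ} (hb : b ≤ n) (rho : (n - b).Partition) (hc : rho.parts.card ≤ b)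

lemma colAddB_card : (colAddB b hb rho hc).parts.card = b := by
  simp only [colAddB, Multiset.card_add, Multiset.card_map, Multiset.card_replicate]
  omega

lemma colAddB_count_one : (colAddB b hb rho hc).parts.count 1 = b - rho.parts.card := by
  simp only [colAddB, Multiset.count_add]
  have h1 : (rho.parts.map (· + 1)).count 1 = 0 := by
    rw [Multiset.count_eq_zero]
    intro h
    obtain ⟨j, hj, hj1⟩ := Multiset.mem_map.mp h
    have := rho.parts_pos hj
    omega
  rw [h1, Multiset.count_replicate]
  simp

lemma colAddB_count_succ (i : ℕ) (hi : 1 ≤ i) :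
    (colAddB b hb rho hc).parts.count (i + 1) = rho.parts.count i := by
  simp only [colAddB, Multiset.count_add]
  rw [Multiset.count_map_eq_count' (· + 1) _ (fun x y h => by simpa using h) i,
    Multiset.count_replicate]
  have : ¬ ((1:ℕ) = i + 1) := by omega
  simp [this]
  omega

lemma colAddB_filter_card (j : ℕ) (hj : 2 ≤ j) :
    ((colAddB b hb rho hc).parts.filter (j ≤ ·)).card
      = (rho.parts.filter (j - 1 ≤ ·)).card := by
  simp only [colAddB, Multiset.filter_add]
  have h1 : (Multiset.replicate (b - rho.parts.card) 1).filter (j ≤ ·) = 0 := by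
    rw [Multiset.filter_eq_nil]
    intro a ha
    rw [Multiset.eq_of_mem_replicate ha]
    omega
  rw [h1, Multiset.filter_map, Multiset.card_add, Multiset.card_map, Multiset.card_zero,
    add_zero]
  congr 1
  apply Multiset.filter_congr
  intro x _
  simp only [Function.comp_apply]
  constructor <;> intro <;> omega

lemma colDelB_colAddB :
    colDelB b (colAddB b hb rho hc) (colAddB_card hb rho hc) = rho := by
  apply Nat.Partition.ext
  simp only [colDelB, colAddB, Multiset.map_add, Multiset.map_map, Multiset.filter_add]
  have h1 : rho.parts.map ((· - 1) ∘ (· + 1)) = rho.parts := by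
    rw [show ((· - 1) ∘ (· + 1) : ℕ → ℕ) = id from funext (fun x => by simp), Multiset.map_id]
  have h2 : (Multiset.replicate (b - rho.parts.card) 1).map (· - 1)
      = Multiset.replicate (b - rho.parts.card) 0 := by
    rw [Multiset.map_replicate]
  rw [h1, h2]
  have h3 : (Multiset.replicate (b - rho.parts.card) 0).filter (· ≠ 0) = 0 := by
    rw [Multiset.filter_eq_nil]
    intro a ha
    rw [Multiset.eq_of_mem_replicate ha]
    simp
  rw [h3, add_zero, Multiset.filter_eq_self]
  exact fun a ha => (rho.parts_pos ha).ne'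

lemma colDelB_card_le {lam : n.Partition} (h : lam.parts.card = b) :
    (colDelB b lam h).parts.card ≤ b := by
  simp only [colDelB]
  calc ((lam.parts.map (· - 1)).filter (· ≠ 0)).card ≤ (lam.parts.map (· - 1)).card :=
        Multiset.card_le_card (Multiset.filter_le _ _)
    _ = b := by rw [Multiset.card_map, h]

lemma colAddB_colDelB {lam : n.Partition} (h : lam.parts.card = b) :
    colAddB b hb (colDelB b lam h) (colDelB_card_le h) = lam := by
  apply Nat.Partition.ext
  simp only [colAddB, colDelB]
  have h1 : (lam.parts.map (· - 1)).filter (· ≠ 0)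
      = (lam.parts.filter (2 ≤ ·)).map (· - 1) := by
    rw [Multiset.filter_map]
    congr 1
    apply Multiset.filter_congr
    intro x _
    simp only [Function.comp_apply]
    constructor <;> intro <;> omega
  rw [h1, Multiset.map_map]
  have h2 : (lam.parts.filter (2 ≤ ·)).map ((· + 1) ∘ (· - 1)) = lam.parts.filter (2 ≤ ·) := by
    conv_rhs => rw [← Multiset.map_id (lam.parts.filter (2 ≤ ·))]
    apply Multiset.map_congr rfl
    intro x hx
    have := (Multiset.mem_filter.mp hx).2
    simp only [Function.comp_apply, id]
    omega
  rw [h2, Multiset.card_map]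
  have h4 : (lam.parts.filter (fun x => ¬ 2 ≤ x)) = Multiset.replicate
      ((lam.parts.filter (fun x => ¬ 2 ≤ x)).card) 1 := by
    rw [Multiset.eq_replicate_card]
    intro x hx
    have := (Multiset.mem_filter.mp hx).2
    have := lam.parts_pos (Multiset.mem_filter.mp hx).1
    omega
  have h5 : b - (lam.parts.filter (2 ≤ ·)).card = (lam.parts.filter (fun x => ¬ 2 ≤ x)).card := by
    have := Multiset.filter_add_not (2 ≤ ·) lam.parts
    have hcards := congrArg Multiset.card this
    rw [Multiset.card_add] at hcards
    omega
  rw [h5, ← h4]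
  exact Multiset.filter_add_not _ _

end structural

/-! ### Weights -/

def ebody {n : ℕ} (lam : n.Partition) : ℕ :=
  ∑ j ∈ Finset.Icc 1 n, ((lam.parts.filter (j ≤ ·)).card)^2

noncomputable def wcu (x : ℝ) {n : ℕ} (lam : n.Partition) : ℝ :=
  x ^ ebody lam * ∏ i ∈ Finset.range (n+1), (phiS (-x) (lam.parts.count i))⁻¹

lemma range_succ_eq_insert (n : ℕ) : Finset.range (n+1) = insert 0 (Finset.Icc 1 n) := by
  ext k; simp [Finset.mem_range, Finset.mem_Icc]; omega

lemma Icc_one_eq_insert {n : ℕ} (hn : 1 ≤ n) : Finset.Icc 1 n = insert 1 (Finset.Icc 2 n) := by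
  ext k; simp [Finset.mem_Icc]; omega

lemma Icc_two_eq_map {n : ℕ} (hn : 1 ≤ n) :
    Finset.Icc 2 n = (Finset.Icc 1 (n-1)).map ⟨(· + 1), add_left_injective 1⟩ := by
  ext k
  simp only [Finset.mem_Icc, Finset.mem_map, Function.Embedding.coeFn_mk]
  constructor
  · intro hk; exact ⟨k - 1, by omega, by omega⟩
  · rintro ⟨j, hj, rfl⟩; omega

lemma part_le {m : ℕ} (rho : m.Partition) {p : ℕ} (hp : p ∈ rho.parts) : p ≤ m := by
  have := Multiset.le_sum_of_mem hp
  rw [rho.parts_sum] at this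
  exact this

lemma count_eq_zero_of_gt {m : ℕ} (rho : m.Partition) {i : ℕ} (hi : m < i) :
    rho.parts.count i = 0 := by
  rw [Multiset.count_eq_zero]
  intro h
  exact absurd (part_le rho h) (by omega)

lemma count_zero_eq_zero {m : ℕ} (rho : m.Partition) : rho.parts.count 0 = 0 := by
  rw [Multiset.count_eq_zero]
  intro h
  exact (rho.parts_pos h).ne rfl

section weight
variable {n b : ℕ} (hb1 : 1 ≤ b) (hb : b ≤ n) (rho : (n - b).Partition) (hc : rho.parts.card ≤ b)
include hb1

lemma ebody_colAddB : ebody (colAddB b hb rho hc) = b^2 + ebody rho := by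
  have hn : 1 ≤ n := le_trans hb1 hb
  rw [ebody, Icc_one_eq_insert hn, Finset.sum_insert (by simp)]
  congr 1
  · -- j = 1 term
    have : (colAddB b hb rho hc).parts.filter (1 ≤ ·) = (colAddB b hb rho hc).parts :=
      Multiset.filter_eq_self.mpr (fun a ha => (colAddB b hb rho hc).parts_pos ha)
    rw [this, colAddB_card]
  · -- j ≥ 2 terms
    rw [Icc_two_eq_map hn, Finset.sum_map]
    simp only [Function.Embedding.coeFn_mk]
    have hsub : Finset.Icc 1 (n-b) ⊆ Finset.Icc 1 (n-1) := by
      apply Finset.Icc_subset_Icc le_rfl; omega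
    calc ∑ j ∈ Finset.Icc 1 (n-1), ((colAddB b hb rho hc).parts.filter (j + 1 ≤ ·)).card ^ 2
        = ∑ j ∈ Finset.Icc 1 (n-1), (rho.parts.filter (j ≤ ·)).card ^ 2 := by
          apply Finset.sum_congr rfl
          intro j hj
          simp only [Finset.mem_Icc] at hj
          rw [colAddB_filter_card hb rho hc (j+1) (by omega)]
          simp only [Nat.add_sub_cancel]
      _ = ∑ j ∈ Finset.Icc 1 (n-b), (rho.parts.filter (j ≤ ·)).card ^ 2 := by
          symm
          apply Finset.sum_subset hsub
          intro j hj hj2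
          simp only [Finset.mem_Icc] at hj hj2
          have : rho.parts.filter (j ≤ ·) = 0 := by
            rw [Multiset.filter_eq_nil]
            intro a ha
            have := part_le rho ha
            omega
          rw [this]
          simp
      _ = ebody rho := rfl

lemma prod_phi_colAddB (x : ℝ) :
    ∏ i ∈ Finset.range (n+1), (phiS (-x) ((colAddB b hb rho hc).parts.count i))⁻¹
      = (phiS (-x) (b - rho.parts.card))⁻¹ *
        ∏ i ∈ Finset.range ((n-b)+1), (phiS (-x) (rho.parts.count i))⁻¹ := by
  have hn : 1 ≤ n := le_trans hb1 hb
  rw [range_succ_eq_insert n, Finset.prod_insert (by simp),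
    count_zero_eq_zero, phiS_zero, inv_one, one_mul,
    Icc_one_eq_insert hn, Finset.prod_insert (by simp), colAddB_count_one,
    range_succ_eq_insert (n-b), Finset.prod_insert (by simp),
    count_zero_eq_zero, phiS_zero, inv_one, one_mul]
  congr 1
  rw [Icc_two_eq_map hn, Finset.prod_map]
  simp only [Function.Embedding.coeFn_mk]
  have hsub : Finset.Icc 1 (n-b) ⊆ Finset.Icc 1 (n-1) := by
    apply Finset.Icc_subset_Icc le_rfl; omega
  calc ∏ j ∈ Finset.Icc 1 (n-1), (phiS (-x) ((colAddB b hb rho hc).parts.count (j+1)))⁻¹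
      = ∏ j ∈ Finset.Icc 1 (n-1), (phiS (-x) (rho.parts.count j))⁻¹ := by
        apply Finset.prod_congr rfl
        intro j hj
        simp only [Finset.mem_Icc] at hj
        rw [colAddB_count_succ hb rho hc j (by omega)]
    _ = ∏ j ∈ Finset.Icc 1 (n-b), (phiS (-x) (rho.parts.count j))⁻¹ := by
        symm
        apply Finset.prod_subset hsub
        intro j hj hj2
        simp only [Finset.mem_Icc] at hj hj2
        rw [count_eq_zero_of_gt rho (by omega), phiS_zero, inv_one]

lemma wcu_colAddB (x : ℝ) :
    wcu x (colAddB b hb rho hc)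
      = x^(b^2) * (phiS (-x) (b - rho.parts.card))⁻¹ * wcu x rho := by
  rw [wcu, wcu, ebody_colAddB hb1 hb rho hc, prod_phi_colAddB hb1 hb rho hc x, pow_add]
  ring

end weight

/-! ### The partition sums -/

noncomputable def Spart (x : ℝ) (m a : ℕ) : ℝ :=
  ∑ rho : m.Partition,
    if rho.parts.card ≤ a then (phiS (-x) (a - rho.parts.card))⁻¹ * wcu x rho else 0

lemma partition_card_mem {n : ℕ} (hn : 1 ≤ n) (lam : n.Partition) :
    lam.parts.card ∈ Finset.Icc 1 n := by
  rw [Finset.mem_Icc]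
  have hle := mcard_le_sum lam.parts (fun p hp => lam.parts_pos hp)
  rw [lam.parts_sum] at hle
  refine ⟨?_, hle⟩
  by_contra h
  have hc : lam.parts.card = 0 := by omega
  rw [Multiset.card_eq_zero] at hc
  have hs := lam.parts_sum
  rw [hc] at hs
  simp at hs
  omega

lemma peel_weight {n b : ℕ} (hb1 : 1 ≤ b) (hbn : b ≤ n) (x : ℝ) (G : ℕ → ℝ) (lam : n.Partition)
    (h' : lam.parts.card = b) :
    G lam.parts.card * wcu x lam
      = G b * (x^(b^2) * ((phiS (-x) (b - (colDelB b lam h').parts.card))⁻¹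
          * wcu x (colDelB b lam h'))) := by
  have key := wcu_colAddB hb1 hbn (colDelB b lam h') (colDelB_card_le h') x
  rw [colAddB_colDelB hbn h'] at key
  rw [key, congrArg G h']
  ring

lemma peel (x : ℝ) {n : ℕ} (hn : 1 ≤ n) (G : ℕ → ℝ) :
    ∑ lam : n.Partition, G lam.parts.card * wcu x lam
      = ∑ b ∈ Finset.Icc 1 n, G b * (x^(b^2) * Spart x (n-b) b) := by
  rw [← Finset.sum_fiberwise_of_maps_to (g := fun lam : n.Partition => lam.parts.card)
    (fun lam _ => partition_card_mem hn lam)]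
  apply Finset.sum_congr rfl
  intro b hb
  rw [Finset.mem_Icc] at hb
  have hb1 : 1 ≤ b := hb.1
  have hbn : b ≤ n := hb.2
  rw [Spart, ← Finset.sum_filter, Finset.mul_sum, Finset.mul_sum]
  refine Finset.sum_bij'
    (i := fun lam (hlam : lam ∈ Finset.univ.filter (fun lam : n.Partition => lam.parts.card = b))
      => colDelB b lam (by simpa using (Finset.mem_filter.mp hlam).2))
    (j := fun rho (hrho : rho ∈ Finset.univ.filter
        (fun rho : (n-b).Partition => rho.parts.card ≤ b))
      => colAddB b hbn rho (by simpa using (Finset.mem_filter.mp hrho).2))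
    ?_ ?_ ?_ ?_ ?_
  · intro a ha
    simp only [Finset.mem_filter, Finset.mem_univ, true_and]
    exact colDelB_card_le _
  · intro a ha
    simp only [Finset.mem_filter, Finset.mem_univ, true_and]
    exact colAddB_card hbn _ _
  · intro a ha
    exact colAddB_colDelB hbn _
  · intro a ha
    exact colDelB_colAddB hbn _ _
  · intro lam hlam
    exact peel_weight hb1 hbn x G lam (by simpa using (Finset.mem_filter.mp hlam).2)

/-! ### Scalar key identities -/

lemma Icc_one_eq_range_map (n : ℕ) :
    Finset.Icc 1 n = (Finset.range n).map ⟨(· + 1), add_left_injective 1⟩ := by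
  ext k
  simp only [Finset.mem_Icc, Finset.mem_map, Finset.mem_range, Function.Embedding.coeFn_mk]
  constructor
  · intro hk; exact ⟨k - 1, by omega, by omega⟩
  · rintro ⟨j, hj, rfl⟩; omega

section keys
variable {t : ℝ} (ht : |t| < 1) (ht0 : t ≠ 0)
include ht ht0

lemma keyfin {n a : ℕ} (hn : 1 ≤ n) (ha : 1 ≤ a) :
    ∑ b ∈ Finset.Icc 1 n, (if b ≤ a then (phiS t (a-b))⁻¹ else 0)
        * (phiS t (n-1) / (phiS t (n-b) * phiS t b * phiS t (b-1))) * t^(b*(b-1))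
      = phiS t (a+n-1) / (phiS t n * phiS t a * phiS t (a-1)) := by
  have V := vfin ht ht0 (a-1) n (n-1)
  rw [show (n-1)+1 = n from by omega] at V
  rw [Icc_one_eq_range_map n, Finset.sum_map]
  simp only [Function.Embedding.coeFn_mk]
  have hcast : ((n-1:ℕ):ℤ) = (n:ℤ) - 1 := by omega
  calc ∑ k ∈ Finset.range n, (if k + 1 ≤ a then (phiS t (a-(k+1)))⁻¹ else 0)
          * (phiS t (n-1) / (phiS t (n-(k+1)) * phiS t (k+1) * phiS t (k+1-1))) * t^((k+1)*(k+1-1))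
      = ∑ k ∈ Finset.range n, (phiS t (n-1) / (phiS t (a-1) * phiS t n)) *
          (t ^ ((k:ℤ) * ((n:ℤ) + (k:ℤ) - ((n-1:ℕ):ℤ))) * (gbS t (a-1) (k:ℤ) * gbS t n (((n-1:ℕ):ℤ) - (k:ℤ)))) := by
        apply Finset.sum_congr rfl
        intro k hk
        rw [Finset.mem_range] at hk
        have e1 : t ^ ((k:ℤ) * ((n:ℤ) + (k:ℤ) - ((n-1:ℕ):ℤ))) = t ^ ((k+1)*(k+1-1)) := by
          rw [show ((k:ℤ) * ((n:ℤ) + (k:ℤ) - ((n-1:ℕ):ℤ))) = (((k+1)*(k+1-1):ℕ):ℤ) from by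
            rw [hcast]; push_cast; ring, zpow_natCast]
        have e2 : gbS t n (((n-1:ℕ):ℤ) - (k:ℤ)) = phiS t n / (phiS t (n-1-k) * phiS t (k+1)) := by
          rw [show (((n-1:ℕ):ℤ) - (k:ℤ)) = ((n-1-k:ℕ):ℤ) from by omega, gbS_nat (by omega),
            show n - (n-1-k) = k+1 from by omega]
        rcases le_or_gt (k+1) a with hka | hka
        · rw [if_pos hka, gbS_nat (show k ≤ a-1 by omega), e1, e2,
            show a - 1 - k = a - (k+1) from by omega, show n - (k+1) = n-1-k from by omega,
            show k+1-1 = k from by omega]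
          have p1 := phiS_ne ht (a-(k+1))
          have p2 := phiS_ne ht (n-1-k)
          have p3 := phiS_ne ht (k+1)
          have p4 := phiS_ne ht k
          have p5 := phiS_ne ht (a-1)
          have p6 := phiS_ne ht n
          have p7 := phiS_ne ht (n-1)
          field_simp
        · rw [if_neg (by omega), gbS_gt (by push_cast; omega)]
          simp
    _ = (phiS t (n-1) / (phiS t (a-1) * phiS t n)) * gbS t ((a-1) + n) ((n-1:ℕ):ℤ) := by
        rw [← Finset.mul_sum, V]
    _ = phiS t (a+n-1) / (phiS t n * phiS t a * phiS t (a-1)) := by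
        rw [gbS_nat (by omega), show (a-1) + n = a+n-1 from by omega,
          show a+n-1 - (n-1) = a from by omega]
        have p1 := phiS_ne ht (a-1)
        have p2 := phiS_ne ht n
        have p3 := phiS_ne ht (n-1)
        have p4 := phiS_ne ht a
        have p5 := phiS_ne ht (a+n-1)
        field_simp

lemma keyinf {n : ℕ} (hn : 1 ≤ n) :
    ∑ b ∈ Finset.Icc 1 n,
        (phiS t b)⁻¹ * (phiS t (n-1) / (phiS t (n-b) * phiS t (b-1))) * t^(b*(b-1))
      = 1 / phiS t n := by
  have V := vinf ht ht0 n (n-1)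
  rw [show (n-1)+1 = n from by omega] at V
  rw [Icc_one_eq_range_map n, Finset.sum_map]
  simp only [Function.Embedding.coeFn_mk]
  have hcast : ((n-1:ℕ):ℤ) = (n:ℤ) - 1 := by omega
  calc ∑ k ∈ Finset.range n, (phiS t (k+1))⁻¹
          * (phiS t (n-1) / (phiS t (n-(k+1)) * phiS t (k+1-1))) * t^((k+1)*(k+1-1))
      = ∑ k ∈ Finset.range n, (phiS t (n-1) / phiS t n) *
          (t ^ ((k:ℤ) * ((n:ℤ) + (k:ℤ) - ((n-1:ℕ):ℤ))) * (ginfS t (k:ℤ) * gbS t n (((n-1:ℕ):ℤ) - (k:ℤ)))) := by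
        apply Finset.sum_congr rfl
        intro k hk
        rw [Finset.mem_range] at hk
        have e1 : t ^ ((k:ℤ) * ((n:ℤ) + (k:ℤ) - ((n-1:ℕ):ℤ))) = t ^ ((k+1)*(k+1-1)) := by
          rw [show ((k:ℤ) * ((n:ℤ) + (k:ℤ) - ((n-1:ℕ):ℤ))) = (((k+1)*(k+1-1):ℕ):ℤ) from by
            rw [hcast]; push_cast; ring, zpow_natCast]
        have e2 : gbS t n (((n-1:ℕ):ℤ) - (k:ℤ)) = phiS t n / (phiS t (n-1-k) * phiS t (k+1)) := by
          rw [show (((n-1:ℕ):ℤ) - (k:ℤ)) = ((n-1-k:ℕ):ℤ) from by omega, gbS_nat (by omega),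
            show n - (n-1-k) = k+1 from by omega]
        rw [ginfS_nat, e1, e2, show n - (k+1) = n-1-k from by omega,
          show k+1-1 = k from by omega]
        have p2 := phiS_ne ht (n-1-k)
        have p3 := phiS_ne ht (k+1)
        have p4 := phiS_ne ht k
        have p6 := phiS_ne ht n
        have p7 := phiS_ne ht (n-1)
        field_simp
    _ = (phiS t (n-1) / phiS t n) * ginfS t ((n-1:ℕ):ℤ) := by
        rw [← Finset.mul_sum, V]
    _ = 1 / phiS t n := by
        rw [ginfS_nat]
        have p3 := phiS_ne ht (n-1)
        have p6 := phiS_ne ht n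
        field_simp

end keys

/-! ### Closed form for Spart -/

lemma Spart_zero (x : ℝ) (a : ℕ) : Spart x 0 a = (phiS (-x) a)⁻¹ := by
  rw [Spart, Finset.univ_unique, Finset.sum_singleton]
  have hparts : (default : Nat.Partition 0).parts = 0 := Nat.Partition.partition_zero_parts _
  rw [if_pos (by rw [hparts]; simp)]
  have hw : wcu x (default : Nat.Partition 0) = 1 := by
    rw [wcu, ebody]
    simp [hparts, phiS_zero]
  rw [hw, hparts]
  simp

lemma pow_sq_split {x : ℝ} {b n : ℕ} (hb : 1 ≤ b) (hbn : b ≤ n) :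
    x^(b^2) * x^(n-b) = x^n * x^(b*(b-1)) := by
  rw [← pow_add, ← pow_add]
  congr 1
  obtain ⟨c, rfl⟩ : ∃ c, b = c+1 := ⟨b-1, by omega⟩
  have h1 : (c+1)^2 = c*c + 2*c+1 := by ring
  have h2 : (c+1)*((c+1)-1) = c*c + c := by rw [Nat.add_sub_cancel]; ring
  rw [h1, h2]
  generalize c * c = m
  omega

lemma neg_pow_even_mul {x : ℝ} (b : ℕ) : (-x)^(b*(b-1)) = x^(b*(b-1)) := by
  apply Even.neg_pow
  rcases Nat.even_or_odd b with h | h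
  · exact h.mul_right _
  · apply Even.mul_left
    exact Nat.Odd.sub_odd h odd_one

lemma Sclosed {x : ℝ} (hx0 : 0 < x) (hx1 : x < 1) : ∀ n a : ℕ, 1 ≤ a →
    Spart x n a = x^n * phiS (-x) (a+n-1) / (phiS (-x) n * phiS (-x) a * phiS (-x) (a-1)) := by
  have ht : |(-x)| < 1 := by rw [abs_neg, abs_of_pos hx0]; exact hx1
  have ht0 : (-x) ≠ 0 := neg_ne_zero.mpr hx0.ne'
  intro n
  induction n using Nat.strong_induction_on with
  | _ n IH =>
  intro a ha
  rcases Nat.eq_zero_or_pos n with rfl | hn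
  · rw [Spart_zero, show a+0-1 = a-1 from by omega, pow_zero, phiS_zero]
    have p1 := phiS_ne ht (a-1)
    have p2 := phiS_ne ht a
    field_simp
  · -- inductive step
    have hp := peel x hn (fun c => if c ≤ a then (phiS (-x) (a-c))⁻¹ else 0)
    rw [Spart, Finset.sum_congr rfl (fun lam _ => show
        (if lam.parts.card ≤ a then (phiS (-x) (a - lam.parts.card))⁻¹ * wcu x lam else 0)
        = (if lam.parts.card ≤ a then (phiS (-x) (a - lam.parts.card))⁻¹ else 0) * wcu x lam from by
      by_cases h : lam.parts.card ≤ a <;> simp [h]),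
      hp, mul_div_assoc, ← keyfin (t := -x) ht ht0 hn ha, Finset.mul_sum]
    apply Finset.sum_congr rfl
    intro b hb
    rw [Finset.mem_Icc] at hb
    have hb1 : 1 ≤ b := hb.1
    have hbn : b ≤ n := hb.2
    rw [IH (n-b) (by omega) b hb1, show b+(n-b)-1 = n-1 from by omega]
    by_cases hba : b ≤ a
    · rw [if_pos hba, neg_pow_even_mul]
      have hpow := pow_sq_split (x := x) hb1 hbn
      linear_combination ((phiS (-x) (a-b))⁻¹ * phiS (-x) (n-1) /
        (phiS (-x) (n-b) * phiS (-x) b * phiS (-x) (b-1))) * hpow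
    · rw [if_neg hba]
      simp

/-! ### kPart vs ebody -/

lemma card_eq_sum_count_superset (s : Multiset ℕ) (F : Finset ℕ) (hs : ∀ x ∈ s, x ∈ F) :
    s.card = ∑ i ∈ F, s.count i := by
  rw [← Multiset.toFinset_sum_count_eq s]
  apply Finset.sum_subset
  · intro i hi
    exact hs i (Multiset.mem_toFinset.mp hi)
  · intro i _ hnot
    exact Multiset.count_eq_zero_of_notMem (fun h => hnot (Multiset.mem_toFinset.mpr h))

lemma card_filter_eq_sum (s : Multiset ℕ) (F : Finset ℕ) (hs : ∀ x ∈ s, x ∈ F)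
    (p : ℕ → Prop) [DecidablePred p] :
    (s.filter p).card = ∑ i ∈ F, if p i then s.count i else 0 := by
  rw [card_eq_sum_count_superset (s.filter p) F (fun x hx => hs x (Multiset.mem_filter.mp hx).1)]
  apply Finset.sum_congr rfl
  intro i _
  rw [Multiset.count_filter]

lemma sum_ite_le (n m K : ℕ) (hm : m ≤ n) :
    ∑ j ∈ Finset.Icc 1 n, (if j ≤ m then K else 0) = m * K := by
  rw [← Finset.sum_filter]
  have : (Finset.Icc 1 n).filter (· ≤ m) = Finset.Icc 1 m := by
    ext j
    simp only [Finset.mem_filter, Finset.mem_Icc]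
    omega
  rw [this, Finset.sum_const, Nat.card_Icc, smul_eq_mul]
  norm_num

lemma double_count (n : ℕ) (c : ℕ → ℕ) (hc0 : c 0 = 0) :
    ∑ j ∈ Finset.Icc 1 n, (∑ i ∈ Finset.Icc 1 n, if j ≤ i then c i else 0)^2
      = 2 * ∑ i ∈ Finset.range (n+1), ∑ j ∈ Finset.range (n+1), (if i < j then i * c i * c j else 0)
        + ∑ i ∈ Finset.range (n+1), (i - 1) * c i ^2 + ∑ i ∈ Finset.range (n+1), c i ^ 2 := by
  -- convert RHS sums from range (n+1) to Icc 1 n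
  have R1 : ∑ i ∈ Finset.range (n+1), ∑ j ∈ Finset.range (n+1), (if i < j then i * c i * c j else 0)
      = ∑ i ∈ Finset.Icc 1 n, ∑ j ∈ Finset.Icc 1 n, (if i < j then i * c i * c j else 0) := by
    rw [range_succ_eq_insert, Finset.sum_insert (by simp)]
    have h0 : ∑ j ∈ insert 0 (Finset.Icc 1 n), (if 0 < j then 0 * c 0 * c j else 0) = 0 := by
      apply Finset.sum_eq_zero
      intro j _
      split <;> simp
    rw [h0, zero_add]
    apply Finset.sum_congr rfl
    intro i _
    rw [Finset.sum_insert (by simp)]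
    simp
  have R2 : ∀ (f : ℕ → ℕ), f 0 = 0 →
      ∑ i ∈ Finset.range (n+1), f i = ∑ i ∈ Finset.Icc 1 n, f i := by
    intro f hf
    rw [range_succ_eq_insert, Finset.sum_insert (by simp), hf, zero_add]
  rw [R1, R2 (fun i => (i-1) * c i ^ 2) (by simp), R2 (fun i => c i ^ 2) (by simp [hc0])]
  -- expand the square
  have L1 : ∀ j, (∑ i ∈ Finset.Icc 1 n, if j ≤ i then c i else 0)^2
      = ∑ i ∈ Finset.Icc 1 n, ∑ k ∈ Finset.Icc 1 n,
          (if j ≤ min i k then c i * c k else 0) := by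
    intro j
    rw [pow_two, Finset.sum_mul_sum]
    apply Finset.sum_congr rfl
    intro i _
    apply Finset.sum_congr rfl
    intro k _
    by_cases h1 : j ≤ i <;> by_cases h2 : j ≤ k <;>
      simp [h1, h2, le_min_iff]
  rw [Finset.sum_congr rfl (fun j _ => L1 j), Finset.sum_comm]
  have L2 : ∀ i ∈ Finset.Icc 1 n,
      (∑ j ∈ Finset.Icc 1 n, ∑ k ∈ Finset.Icc 1 n, (if j ≤ min i k then c i * c k else 0))
      = ∑ k ∈ Finset.Icc 1 n, min i k * (c i * c k) := by
    intro i hi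
    rw [Finset.sum_comm]
    apply Finset.sum_congr rfl
    intro k hk
    simp only [Finset.mem_Icc] at hi hk
    exact sum_ite_le n (min i k) (c i * c k) (by omega)
  rw [Finset.sum_congr rfl L2]
  -- split min into three cases
  have L3 : ∀ i ∈ Finset.Icc 1 n, ∀ k ∈ Finset.Icc 1 n,
      min i k * (c i * c k) = (if i < k then i * c i * c k else 0)
        + (if k < i then k * c i * c k else 0) + (if i = k then i * c i * c k else 0) := by
    intro i _ k _
    rcases lt_trichotomy i k with h | h | h
    · rw [min_eq_left h.le, if_pos h, if_neg (by omega : ¬ k < i), if_neg (by omega : ¬ i = k)]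
      ring
    · subst h
      simp
      ring
    · rw [min_eq_right h.le, if_neg (by omega : ¬ i < k), if_pos h, if_neg (by omega : ¬ i = k)]
      ring
  rw [Finset.sum_congr rfl (fun i hi => Finset.sum_congr rfl (fun k hk => L3 i hi k hk))]
  simp only [Finset.sum_add_distrib]
  have L4 : ∑ i ∈ Finset.Icc 1 n, ∑ k ∈ Finset.Icc 1 n, (if k < i then k * c i * c k else 0)
      = ∑ i ∈ Finset.Icc 1 n, ∑ k ∈ Finset.Icc 1 n, (if i < k then i * c i * c k else 0) := by
    rw [Finset.sum_comm]
    apply Finset.sum_congr rfl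
    intro i _
    apply Finset.sum_congr rfl
    intro k _
    split <;> ring
  have L5 : ∑ i ∈ Finset.Icc 1 n, ∑ k ∈ Finset.Icc 1 n, (if i = k then i * c i * c k else 0)
      = ∑ i ∈ Finset.Icc 1 n, i * c i ^ 2 := by
    apply Finset.sum_congr rfl
    intro i hi
    rw [Finset.sum_ite_eq (Finset.Icc 1 n) i (fun k => i * c i * c k), if_pos hi]
    ring
  have L6 : ∑ i ∈ Finset.Icc 1 n, ((i-1) * c i ^2) + ∑ i ∈ Finset.Icc 1 n, c i ^ 2
      = ∑ i ∈ Finset.Icc 1 n, i * c i ^ 2 := by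
    rw [← Finset.sum_add_distrib]
    apply Finset.sum_congr rfl
    intro i hi
    simp only [Finset.mem_Icc] at hi
    have : (i-1) + 1 = i := by omega
    calc (i-1) * c i ^2 + c i ^2 = ((i-1) + 1) * c i ^2 := by ring
      _ = i * c i ^2 := by rw [this]
  rw [L4, L5]
  omega

/-! ### The given definitions: reformulation -/

lemma ebody_eq {n : ℕ} (lam : n.Partition) :
    ebody lam = kPart lam + ∑ i ∈ Finset.range (n+1), lam.parts.count i ^ 2 := by
  rw [ebody, kPart]
  rw [Finset.sum_congr rfl (fun j hj => by
    rw [card_filter_eq_sum lam.parts (Finset.Icc 1 n)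
      (fun x hx => Finset.mem_Icc.mpr ⟨lam.parts_pos hx, part_le lam hx⟩) (j ≤ ·)])]
  exact double_count n (fun i => lam.parts.count i) (count_zero_eq_zero lam)

lemma exp_arith (m : ℕ) : m*(m-1)/2 + (m*(m-1)/2 + m) = m^2 := by
  have hd : 2 ∣ m*(m-1) := by
    rcases Nat.even_or_odd m with h | h
    · exact (h.mul_right _).two_dvd
    · exact ((Nat.Odd.sub_odd h odd_one).mul_left _).two_dvd
  have h2 : m*(m-1)/2 * 2 = m*(m-1) := Nat.div_mul_cancel hd
  have h3 : m*(m-1) + m = m^2 := by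
    rcases m with _ | c
    · simp
    · simp only [Nat.succ_sub_one]
      ring
  generalize hA : m*(m-1) = A at h2 h3 ⊢
  generalize hB : m^2 = B at h3 ⊢
  omega

lemma factor_eq {q : ℝ} (hq0 : q ≠ 0) (m : ℕ) :
    q^(m*(m-1)/2) * ∏ k ∈ Finset.Icc 1 m, (q^k - (-1:ℝ)^k)
      = q^(m^2) * phiS (-q⁻¹) m := by
  have hfac : ∀ k ∈ Finset.Icc 1 m, q^k - (-1:ℝ)^k = q^k * (1 - (-q⁻¹)^k) := by
    intro k _
    rw [mul_sub, mul_one, ← mul_pow, show q * -q⁻¹ = -1 from by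
      rw [mul_neg, mul_inv_cancel₀ hq0]]
  rw [Finset.prod_congr rfl hfac, Finset.prod_mul_distrib, Finset.prod_pow_eq_pow_sum,
    ← mul_assoc, ← pow_add, phiS]
  congr 2
  have h1 : ∑ k ∈ Finset.Icc 1 m, k = ∑ i ∈ Finset.range (m+1), i := by
    rw [range_succ_eq_insert, Finset.sum_insert (by simp), zero_add]
  rw [h1, Finset.sum_range_succ, Finset.sum_range_id]
  exact exp_arith m

lemma CU_eq {q : ℝ} (hq0 : q ≠ 0) {n : ℕ} (lam : n.Partition) :
    CU lam q = q ^ ebody lam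
      * ∏ i ∈ Finset.range (n+1), phiS (-q⁻¹) (lam.parts.count i) := by
  rw [CU, Finset.prod_congr rfl (fun i _ => factor_eq hq0 (lam.parts.count i)),
    Finset.prod_mul_distrib, Finset.prod_pow_eq_pow_sum, ← mul_assoc, ← pow_add, ebody_eq]

lemma one_div_CU {q : ℝ} (hq : 1 < q) {n : ℕ} (lam : n.Partition) :
    1 / CU lam q = wcu q⁻¹ lam := by
  have hq0 : q ≠ 0 := by positivity
  rw [CU_eq hq0 lam, wcu, one_div, mul_inv, ← inv_pow, Finset.prod_inv_distrib]

/-! ### Final assembly -/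

lemma Ftotal {x : ℝ} (hx0 : 0 < x) (hx1 : x < 1) {n : ℕ} (hn : 1 ≤ n) :
    ∑ lam : n.Partition, wcu x lam = x^n / phiS (-x) n := by
  have ht : |(-x)| < 1 := by rw [abs_neg, abs_of_pos hx0]; exact hx1
  have ht0 : (-x) ≠ 0 := neg_ne_zero.mpr hx0.ne'
  have hp := peel x hn (fun _ => (1:ℝ))
  simp only [one_mul] at hp
  rw [hp, show x^n / phiS (-x) n = x^n * (1 / phiS (-x) n) from by ring,
    ← keyinf ht ht0 hn, Finset.mul_sum]
  apply Finset.sum_congr rfl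
  intro b hb
  rw [Finset.mem_Icc] at hb
  rw [Sclosed hx0 hx1 (n-b) b hb.1, show b+(n-b)-1 = n-1 from by omega, neg_pow_even_mul]
  have hpow := pow_sq_split (x := x) hb.1 hb.2
  linear_combination (phiS (-x) (n-1) / (phiS (-x) (n-b) * phiS (-x) b * phiS (-x) (b-1))) * hpow

/-- Lemma 2.8(2) (unitary Stong's formula): for `n ≥ 1` and real `q > 1`,
`Σ_{λ ⊢ n} 1/C_{U,λ}(q) = 1/(q^n (1 + q⁻¹)(1 - q⁻²) ⋯ (1 - (-1)ⁿ q⁻ⁿ))`, i.e. the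
denominator is `q^n ∏_{k=1}^{n} (1 - (-1)^k q^{-k})`. -/
theorem statement13 (n : ℕ) (hn : 1 ≤ n) (q : ℝ) (hq : 1 < q) :
    ∑ lam : n.Partition, 1 / CU lam q =
      1 / (q ^ n * ∏ k ∈ Finset.Icc 1 n, (1 - (-1 : ℝ) ^ k * q⁻¹ ^ k)) := by

  have hq0 : (0:ℝ) < q := lt_trans one_pos hq
  have hx0 : 0 < q⁻¹ := inv_pos.mpr hq0
  have hx1 : q⁻¹ < 1 := by
    rw [inv_lt_one_iff₀]
    right
    exact hq
  rw [Finset.sum_congr rfl (fun lam _ => one_div_CU hq lam), Ftotal hx0 hx1 hn]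
  have hprod : ∏ k ∈ Finset.Icc 1 n, (1 - (-1:ℝ)^k * q⁻¹^k) = phiS (-q⁻¹) n := by
    rw [phiS]
    apply Finset.prod_congr rfl
    intro k _
    rw [show ((-1:ℝ))^k * q⁻¹^k = (-q⁻¹)^k from by rw [← mul_pow, neg_one_mul]]
  rw [hprod, one_div, mul_inv, ← inv_pow, div_eq_mul_inv]
end

section
/- For all integers a ≥ 0 and s ≥ 1, the integer s divides Σ_{r} μ(r)·(−1)^{s/r}·binom(s/r + a/r − 1, a/r), where the sum is over all positive integers r dividing both s and a (every positive integer is considered to divide 0, so for a = 0 the sum is over all positive divisors r of s and each binomial coefficient equals 1). Equivalently, F(a,s) := (1/s)·Σ_{r ∣ s, r ∣ a} μ(r)·(−1)^{s/r}·binom(s/r + a/r − 1, a/r) is an integer for all a ≥ 0 and s ≥ 1. -/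
open Polynomial Finset

private lemma frob_cong17 (p : ℕ) (hp : p.Prime) (f : ℤ[X]) :
    C (p : ℤ) ∣ f ^ p - expand ℤ p f := by
  haveI : Fact p.Prime := ⟨hp⟩
  rw [C_dvd_iff_dvd_coeff]
  intro i
  have h0 : Polynomial.map (Int.castRingHom (ZMod p)) (f ^ p - expand ℤ p f) = 0 := by
    rw [Polynomial.map_sub, Polynomial.map_pow, Polynomial.map_expand, sub_eq_zero]
    have h := Polynomial.map_frobenius_expand p (Polynomial.map (Int.castRingHom (ZMod p)) f)
    rwa [ZMod.frobenius_zmod, Polynomial.map_id, eq_comm] at h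
  have := congrArg (fun g => Polynomial.coeff g i) h0
  simp only [Polynomial.coeff_map, Polynomial.coeff_zero] at this
  rwa [← ZMod.intCast_zmod_eq_zero_iff_dvd]

private lemma fact_choose_key17 {p q j : ℕ} (hp : p.Prime) (hq : q ≠ 0) (hj : j ≠ 0)
    (hjq : j ≤ q) :
    q.factorization p + 1 ≤ (q.choose j).factorization p + j := by
  obtain ⟨q, rfl⟩ := Nat.exists_eq_succ_of_ne_zero hq
  obtain ⟨j, rfl⟩ := Nat.exists_eq_succ_of_ne_zero hj
  have hid := Nat.add_one_mul_choose_eq q j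
  have h1 : (q.choose j) ≠ 0 := (Nat.choose_pos (by omega)).ne'
  have h2 : ((q+1).choose (j+1)) ≠ 0 := (Nat.choose_pos hjq).ne'
  have hfac : (q+1).factorization p + (q.choose j).factorization p
      = ((q+1).choose (j+1)).factorization p + (j+1).factorization p := by
    have := congrArg (fun m => m.factorization p) hid
    simpa [Nat.succ_eq_add_one, Nat.factorization_mul, h1, h2] using this
  have hvj : (j+1).factorization p + 1 ≤ j + 1 := by
    have h3 : p ^ ((j+1).factorization p) ≤ j + 1 :=
      Nat.le_of_dvd (by omega) (Nat.ordProj_dvd _ _)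
    have h4 : (j+1).factorization p < p ^ ((j+1).factorization p) :=
      Nat.lt_pow_self hp.one_lt
    omega
  simp only [Nat.succ_eq_add_one] at *
  omega

private lemma pow_cong17 (p : ℕ) (hp : p.Prime) (f : ℤ[X]) (q : ℕ) (hq : q ≠ 0) :
    C ((p : ℤ) ^ (q.factorization p + 1)) ∣ f ^ (p * q) - expand ℤ p (f ^ q) := by
  obtain ⟨g, hg⟩ := frob_cong17 p hp f
  have hfp : f ^ p = expand ℤ p f + C (p : ℤ) * g := by linear_combination hg
  have hE : expand ℤ p (f ^ q) = (expand ℤ p f) ^ q := map_pow _ _ _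
  rw [pow_mul, hfp, hE, add_pow, Finset.sum_range_succ]
  simp only [Nat.sub_self, pow_zero, mul_one, Nat.choose_self, Nat.cast_one]
  rw [add_sub_cancel_right]
  apply Finset.dvd_sum
  intro k hk
  rw [Finset.mem_range] at hk
  have hj : q - k ≠ 0 := by omega
  have key := fact_choose_key17 hp hq hj (Nat.sub_le _ _)
  rw [Nat.choose_symm hk.le] at key
  set fc := (q.choose k).factorization p with hfc
  have h1 : (p : ℤ) ^ (q.factorization p + 1) ∣ (q.choose k : ℤ) * (p : ℤ) ^ (q - k) := by
    have hd : (p : ℤ) ^ fc ∣ (q.choose k : ℤ) := by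
      exact_mod_cast Int.natCast_dvd_natCast.mpr (Nat.ordProj_dvd _ _)
    calc (p : ℤ) ^ (q.factorization p + 1) ∣ (p : ℤ) ^ (fc + (q - k)) := pow_dvd_pow _ key
      _ = (p : ℤ) ^ fc * (p : ℤ) ^ (q - k) := pow_add _ _ _
      _ ∣ (q.choose k : ℤ) * (p : ℤ) ^ (q - k) := mul_dvd_mul hd dvd_rfl
  obtain ⟨c, hc⟩ := h1
  refine ⟨(expand ℤ p f) ^ k * g ^ (q - k) * C c, ?_⟩
  rw [mul_pow, ← C_pow]
  rw [← C_eq_natCast]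
  calc (expand ℤ p f) ^ k * (C ((p:ℤ) ^ (q - k)) * g ^ (q - k)) * C ((q.choose k : ℤ))
      = (expand ℤ p f) ^ k * g ^ (q - k) * C ((q.choose k : ℤ) * (p:ℤ) ^ (q - k)) := by
        rw [C_mul]; ring
    _ = C ((p:ℤ) ^ (q.factorization p + 1)) * ((expand ℤ p f) ^ k * g ^ (q - k) * C c) := by
        rw [hc, C_mul]; ring

private lemma coeff_cong17 (f : ℤ[X]) {n r p : ℕ} (hn : n ≠ 0) (hp : p.Prime) (hpn : p ∣ n)
    (hr : r ∣ n) (hpr : ¬ p ∣ r) (i : ℕ) :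
    (p : ℤ) ^ (n.factorization p) ∣
      (f ^ (n / r)).coeff i - (expand ℤ p (f ^ (n / (p * r)))).coeff i := by
  have hr0 : r ≠ 0 := by rintro rfl; exact hpr (dvd_zero p)
  have hcop : Nat.Coprime p r := (Nat.Prime.coprime_iff_not_dvd hp).mpr hpr
  have hprn : p * r ∣ n := hcop.mul_dvd_of_dvd_of_dvd hpn hr
  set q := n / (p * r) with hqdef
  have hq0 : q ≠ 0 := by
    rw [hqdef, Nat.div_ne_zero_iff, and_iff_right (Nat.mul_ne_zero hp.ne_zero hr0)]
    exact Nat.le_of_dvd (Nat.pos_of_ne_zero hn) hprn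
  have hfq : q.factorization p + 1 = n.factorization p := by
    have h1 : q.factorization = n.factorization - (p * r).factorization :=
      Nat.factorization_div hprn
    have hα : 1 ≤ n.factorization p := hp.factorization_pos_of_dvd hn hpn
    have h2 : (p * r).factorization p = 1 := by
      rw [Nat.factorization_mul hp.ne_zero hr0]
      simp [hp.factorization, Nat.factorization_eq_zero_of_not_dvd hpr]
    have := congrArg (fun g => g p) h1
    simp only [Finsupp.coe_tsub, Pi.sub_apply, h2] at this
    omega
  have hnr : n / r = p * q := by
    rw [hqdef, mul_comm p r, ← Nat.div_div_eq_div_mul,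
      Nat.mul_div_cancel' ((Nat.dvd_div_iff_mul_dvd hr).mpr (by rwa [mul_comm r p]))]
  have key := pow_cong17 p hp f q hq0
  rw [hfq, C_dvd_iff_dvd_coeff] at key
  have := key i
  rwa [Polynomial.coeff_sub, ← hnr] at this

private lemma gauss_prime_pow17 (f : ℤ[X]) (n k : ℕ) (hn : n ≠ 0) {p : ℕ} (hp : p.Prime)
    (hpn : p ∣ n) :
    (p : ℤ) ^ (n.factorization p) ∣
      ∑ r ∈ n.divisors.filter (fun r => r ∣ k),
        (ArithmeticFunction.moebius r : ℤ) * (f ^ (n / r)).coeff (k / r) := by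
  classical
  set α := n.factorization p
  set D := n.divisors.filter (fun r => r ∣ k) with hD
  set t : ℕ → ℤ := fun r => (ArithmeticFunction.moebius r : ℤ) * (f ^ (n / r)).coeff (k / r)
    with ht
  have hmemD : ∀ {r}, r ∈ D ↔ r ∣ n ∧ r ∣ k ∧ r ≠ 0 := by
    intro r
    simp only [hD, mem_filter, Nat.mem_divisors]
    constructor
    · rintro ⟨⟨h1, _⟩, h2⟩
      exact ⟨h1, h2, fun h => hn (by simpa [h] using h1)⟩
    · rintro ⟨h1, h2, _⟩; exact ⟨⟨h1, hn⟩, h2⟩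
  by_cases hpk : p ∣ k
  · have hsplit := Finset.sum_filter_add_sum_filter_not D (fun r => ¬ p ∣ r) t
    set D₀ := D.filter (fun r => ¬ p ∣ r) with hD₀
    set D₁ := D.filter (fun r => ¬ ¬ p ∣ r) with hD₁
    have hdrop : ∑ r ∈ D₁.filter (fun r => ¬ p ∣ r / p), t r = ∑ r ∈ D₁, t r := by
      apply Finset.sum_filter_of_ne
      intro r hrD₁ htr hcon
      apply htr
      simp only [hD₁, mem_filter, not_not] at hrD₁
      have hpp : p * p ∣ r := (Nat.dvd_div_iff_mul_dvd hrD₁.2).mp hcon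
      have hsq : ¬ Squarefree r := fun hsq => hp.one_lt.ne' (Nat.isUnit_iff.mp (hsq p hpp))
      simp [ht, ArithmeticFunction.moebius_eq_zero_of_not_squarefree hsq]
    have hbij : ∑ r ∈ D₁.filter (fun r => ¬ p ∣ r / p), t r = ∑ r ∈ D₀, t (p * r) := by
      apply Finset.sum_nbij' (fun r => r / p) (fun r => p * r)
      · intro r hrmem
        simp only [mem_filter, hD₁, not_not] at hrmem
        obtain ⟨⟨hrD, hpr⟩, hnd⟩ := hrmem
        rw [hmemD] at hrD
        simp only [hD₀, mem_filter, hmemD]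
        have hr0 : r ≠ 0 := hrD.2.2
        have : r / p ≠ 0 := by
          rw [Nat.div_ne_zero_iff, and_iff_right hp.ne_zero]
          exact Nat.le_of_dvd (Nat.pos_of_ne_zero hr0) hpr
        exact ⟨⟨(Nat.div_dvd_of_dvd hpr).trans hrD.1, (Nat.div_dvd_of_dvd hpr).trans hrD.2.1,
          this⟩, hnd⟩
      · intro r hrmem
        simp only [hD₀, mem_filter, hmemD] at hrmem
        obtain ⟨⟨hrn, hrk, hr0⟩, hpr⟩ := hrmem
        have hcop : Nat.Coprime p r := (Nat.Prime.coprime_iff_not_dvd hp).mpr hpr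
        simp only [mem_filter, hD₁, not_not, hmemD]
        refine ⟨⟨⟨hcop.mul_dvd_of_dvd_of_dvd hpn hrn, hcop.mul_dvd_of_dvd_of_dvd hpk hrk,
          Nat.mul_ne_zero hp.ne_zero hr0⟩, Dvd.intro r rfl⟩, ?_⟩
        rw [Nat.mul_div_cancel_left r hp.pos]
        exact hpr
      · intro r hrmem
        simp only [mem_filter, hD₁, not_not] at hrmem
        exact Nat.mul_div_cancel' hrmem.1.2
      · intro r _
        exact Nat.mul_div_cancel_left r hp.pos
      · intro r hrmem
        simp only [mem_filter, hD₁, not_not] at hrmem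
        rw [Nat.mul_div_cancel' hrmem.1.2]
    have htotal : ∑ r ∈ D, t r = ∑ r ∈ D₀, (t r + t (p * r)) := by
      rw [Finset.sum_add_distrib, ← hbij, hdrop, hsplit]
    rw [htotal]
    apply Finset.dvd_sum
    intro r hrmem
    simp only [hD₀, mem_filter, hmemD] at hrmem
    obtain ⟨⟨hrn, hrk, hr0⟩, hpr⟩ := hrmem
    have hcop : Nat.Coprime p r := (Nat.Prime.coprime_iff_not_dvd hp).mpr hpr
    have hmu : (ArithmeticFunction.moebius (p * r) : ℤ)
        = -(ArithmeticFunction.moebius r : ℤ) := by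
      rw [ArithmeticFunction.isMultiplicative_moebius.map_mul_of_coprime hcop,
        ArithmeticFunction.moebius_apply_prime hp]
      ring
    have hprk : p * r ∣ k := hcop.mul_dvd_of_dvd_of_dvd hpk hrk
    have hpkr : p ∣ k / r := by
      rw [Nat.dvd_div_iff_mul_dvd hrk, mul_comm]
      exact hprk
    have hcc := coeff_cong17 f hn hp hpn hrn hpr (k / r)
    have heq : k / r / p = k / (p * r) := by
      rw [Nat.div_div_eq_div_mul, mul_comm]
    rw [Polynomial.coeff_expand hp.pos, if_pos hpkr, heq] at hcc
    have : t r + t (p * r)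
        = (ArithmeticFunction.moebius r : ℤ) *
          ((f ^ (n / r)).coeff (k / r) - (f ^ (n / (p * r))).coeff (k / (p * r))) := by
      simp only [ht, hmu]; ring
    rw [this]
    exact Dvd.dvd.mul_left hcc _
  · apply Finset.dvd_sum
    intro r hr
    rw [hmemD] at hr
    obtain ⟨hrn, hrk, hr0⟩ := hr
    have hpr : ¬ p ∣ r := fun h => hpk (h.trans hrk)
    have hpkr : ¬ p ∣ k / r := fun h => hpk (h.trans (Nat.div_dvd_of_dvd hrk))
    have := coeff_cong17 f hn hp hpn hrn hpr (k / r)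
    rw [Polynomial.coeff_expand hp.pos, if_neg hpkr, sub_zero] at this
    exact Dvd.dvd.mul_left this _

private lemma gauss_cong17 (f : ℤ[X]) (n k : ℕ) (hn : n ≠ 0) :
    (n : ℤ) ∣ ∑ r ∈ n.divisors.filter (fun r => r ∣ k),
        (ArithmeticFunction.moebius r : ℤ) * (f ^ (n / r)).coeff (k / r) := by
  have hfac : (n : ℤ) = ∏ p ∈ n.primeFactors, (p : ℤ) ^ (n.factorization p) := by
    have : n = ∏ p ∈ n.primeFactors, p ^ n.factorization p := by
      conv_lhs => rw [← Nat.factorization_prod_pow_eq_self hn]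
      rw [Finsupp.prod, Nat.support_factorization]
    conv_lhs => rw [this]
    push_cast; rfl
  rw [hfac]
  apply Finset.prod_dvd_of_coprime
  · intro p hp q hq hpq
    simp only [Finset.mem_coe, Nat.mem_primeFactors] at hp hq
    apply IsCoprime.pow
    rw [Nat.isCoprime_iff_coprime]
    exact (Nat.coprime_primes hp.1 hq.1).mpr hpq
  · intro p hp
    rw [Nat.mem_primeFactors] at hp
    exact gauss_prime_pow17 f n k hn hp.1 hp.2.1

private lemma choose_id17 (e b : ℕ) :
    (e + 1 + b) * (e + b).choose b = (e + 1) * (e + 1 + b).choose b := by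
  have h := Nat.add_one_mul_choose_eq (e + b) e
  have h1 : (e + b).choose e = (e + b).choose b := by
    rw [← Nat.choose_symm (by omega : e ≤ e + b)]
    congr 1; omega
  have h2 : (e + b + 1).choose (e + 1) = (e + 1 + b).choose b := by
    rw [← Nat.choose_symm (by omega : e + 1 ≤ e + b + 1)]
    congr 1 <;> omega
  rw [h1, h2] at h
  have h3 : e + 1 + b = e + b + 1 := by omega
  rw [h3, h]; ring

/-- Theorem 4.2(1): for all integers `a ≥ 0` and `s ≥ 1`, the integer `s` divides
`Σ_{r ∣ s, r ∣ a} μ(r) (-1)^{s/r} C(s/r + a/r - 1, a/r)`, the sum being over all positive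
integers `r` dividing both `s` and `a` (every positive integer divides `0`). Equivalently,
`F(a,s) = (1/s) Σ_{r ∣ s, r ∣ a} μ(r) (-1)^{s/r} C(s/r + a/r - 1, a/r)` is an integer. -/
theorem statement17 (a s : ℕ) (hs : 1 ≤ s) :
    (s : ℤ) ∣
      ∑ r ∈ s.divisors.filter (fun r => r ∣ a),
        (ArithmeticFunction.moebius r : ℤ) * (-1) ^ (s / r) *
          (Nat.choose (s / r + a / r - 1) (a / r) : ℤ) := by
  set n := s + a with hn_def
  have hn : n ≠ 0 := by omega
  have hsets : s.divisors.filter (fun r => r ∣ a) = n.divisors.filter (fun r => r ∣ a) := by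
    ext r
    simp only [Finset.mem_filter, Nat.mem_divisors]
    constructor
    · rintro ⟨⟨h1, _⟩, h3⟩
      exact ⟨⟨dvd_add h1 h3, hn⟩, h3⟩
    · rintro ⟨⟨h1, _⟩, h3⟩
      refine ⟨⟨?_, by omega⟩, h3⟩
      have h4 := Nat.dvd_sub h1 h3
      simpa [hn_def] using h4
  have hcoeff : ∀ m j : ℕ, ((X - 1 : ℤ[X]) ^ m).coeff j
      = (-1 : ℤ) ^ (m - j) * (m.choose j : ℤ) := by
    intro m j
    have hX : (X - 1 : ℤ[X]) = X + C (-1) := by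
      rw [map_neg, C_1, sub_eq_add_neg]
    rw [hX, Polynomial.coeff_X_add_C_pow]
  obtain ⟨T', hT'⟩ := gauss_cong17 (X - 1 : ℤ[X]) n a hn
  refine ⟨T', ?_⟩
  have hn0 : (n : ℤ) ≠ 0 := Int.natCast_ne_zero.mpr hn
  apply mul_left_cancel₀ hn0
  rw [show (n : ℤ) * ((s : ℤ) * T') = (s : ℤ) * ((n : ℤ) * T') by ring, ← hT', Finset.mul_sum,
    Finset.mul_sum, hsets]
  apply Finset.sum_congr rfl
  intro r hr
  simp only [Finset.mem_filter, Nat.mem_divisors] at hr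
  obtain ⟨⟨hrn, _⟩, hra⟩ := hr
  have hrs : r ∣ s := by
    have h4 := Nat.dvd_sub hrn hra
    simpa [hn_def] using h4
  have hr0 : r ≠ 0 := by rintro rfl; simp only [Nat.zero_dvd] at hrs; omega
  have hrpos : 0 < r := Nat.pos_of_ne_zero hr0
  have hd1 : 1 ≤ s / r := (Nat.one_le_div_iff hrpos).mpr (Nat.le_of_dvd (by omega) hrs)
  obtain ⟨e, he⟩ : ∃ e, s / r = e + 1 := ⟨s / r - 1, by omega⟩
  set b := a / r with hb
  have hnr : n / r = s / r + b := by
    rw [hn_def, Nat.add_div_of_dvd_right hrs]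
  have hsub : n / r - b = s / r := by omega
  rw [hcoeff, hnr, Nat.add_sub_cancel]
  have hkey : (n : ℤ) * (((e + b).choose b : ℕ) : ℤ)
      = (s : ℤ) * (((e + 1 + b).choose b : ℕ) : ℤ) := by
    have hns : n = r * (n / r) := (Nat.mul_div_cancel' hrn).symm
    have hss : s = r * (s / r) := (Nat.mul_div_cancel' hrs).symm
    have : n * ((e + b).choose b) = s * ((e + 1 + b).choose b) := by
      conv_lhs => rw [hns]
      conv_rhs => rw [hss]
      rw [hnr, he, mul_assoc, mul_assoc, choose_id17]
    exact_mod_cast this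
  rw [he, show e + 1 + b - 1 = e + b by rw [Nat.add_right_comm]; exact Nat.add_sub_cancel _ _]
  linear_combination ((ArithmeticFunction.moebius r : ℤ) * (-1 : ℤ) ^ (e + 1)) * hkey
end
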